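/- arXiv:1002.2781 — 2 statements merged into one kernel-verified Lean document; each statement's English description precedes it below -/
import Mathlib

section
/- Let Tr be the trace of a transient branching random walk on a graph G with bounded degrees. Then for every k ≥ 1, with positive probability Tr contains a line segment of length k, i.e., a path x_0, x_1, …, x_k in Tr with x_i ∼ x_{i+1} and such that the interior vertices x_1, …, x_{k−1} all have degree 2 in Tr. -/
open MeasureTheory Filter
open scoped ENNReal

/-- Canonical sample space for a branching random walk: each potential particle
(Ulam–Harris encoded as a `List ℕ`, child `i :: v` of `v`) carries a pair
(offspring number, uniform seed used for its random-walk step). -/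
abbrev BRWOmega : Type := List ℕ → ℕ × ℝ

/-- Offspring number of the particle `v`. -/
def offspring (ω : BRWOmega) (v : List ℕ) : ℕ := (ω v).1

/-- The particle `v` is alive (belongs to the family tree). -/
def alive (ω : BRWOmega) : List ℕ → Prop
  | [] => True
  | i :: v => i < offspring ω v ∧ alive ω v

/-- Degree of a vertex. -/
noncomputable def gdeg (G : SimpleGraph ℕ) (x : ℕ) : ℕ := (G.neighborSet x).ncard

/-- One step of simple random walk from `x`, using uniform seed `u ∈ (0,1)`:
choose the `⌊u · deg x⌋`-th neighbour of `x`. -/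
noncomputable def gstep (G : SimpleGraph ℕ) (x : ℕ) (u : ℝ) : ℕ :=
  Nat.nth (fun y => G.Adj x y) ⌊u * (gdeg G x : ℝ)⌋₊

/-- Position of particle `v` of the tree-indexed walk started at `o`. -/
noncomputable def pos (G : SimpleGraph ℕ) (o : ℕ) (ω : BRWOmega) : List ℕ → ℕ
  | [] => o
  | i :: v => gstep G (pos G o ω v) (ω (i :: v)).2

/-- `P` is the product of the probability measures `ν i` over the coordinates `i : ι`. -/
def IsProductWith {ι α : Type*} [MeasurableSpace α] (ν : ι → Measure α)
    (P : Measure (ι → α)) : Prop :=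
  IsProbabilityMeasure P ∧
    ∀ s : Finset ι,
      Measure.map (fun ω (i : s) => ω i) P = Measure.pi (fun i : s => ν i)

/-- The uniform measure on `(0,1)`. -/
noncomputable def unif01 : Measure ℝ := volume.restrict (Set.Ioo (0 : ℝ) 1)

/-- The law of one coordinate of the BRW randomness: offspring distribution `p`
together with an independent uniform seed. -/
noncomputable def coordLaw (p : PMF ℕ) : Measure (ℕ × ℝ) := (p.toMeasure).prod unif01

/-- The branching random walk started at `x` visits `x` infinitely often. -/
def VisitsInf (G : SimpleGraph ℕ) (x : ℕ) (ω : BRWOmega) : Prop :=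
  {v : List ℕ | alive ω v ∧ pos G x ω v = x}.Infinite

/-- Vertices visited by the BRW started at `o`. -/
def traceV (G : SimpleGraph ℕ) (o : ℕ) (ω : BRWOmega) : Set ℕ :=
  {x | ∃ v, alive ω v ∧ pos G o ω v = x}

/-- The trace of the BRW: the subgraph of all traversed edges. -/
def traceGraph (G : SimpleGraph ℕ) (o : ℕ) (ω : BRWOmega) : SimpleGraph ℕ where
  Adj x y := x ≠ y ∧ ∃ i v, alive ω (i :: v) ∧
      ((pos G o ω v = x ∧ pos G o ω (i :: v) = y) ∨
        (pos G o ω v = y ∧ pos G o ω (i :: v) = x))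
  symm := by
    refine ⟨?_⟩
    rintro x y ⟨hne, i, v, hv, hc⟩
    exact ⟨hne.symm, i, v, hv, hc.symm⟩
  loopless := by refine ⟨?_⟩; rintro x ⟨hne, -⟩; exact hne rfl

/-- `n`-step transition probabilities of the simple random walk. -/
noncomputable def pstep (G : SimpleGraph ℕ) : ℕ → ℕ → ℕ → ℝ
  | 0, x, y => if x = y then 1 else 0
  | n + 1, x, y => ∑' z : G.neighborSet x, (gdeg G x : ℝ)⁻¹ * pstep G n z y

/-- Spectral radius of the simple random walk on `G` (computed at base point `o`). -/
noncomputable def specRad (G : SimpleGraph ℕ) (o : ℕ) : ℝ :=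
  limsup (fun n : ℕ => (pstep G n o o) ^ ((n : ℝ)⁻¹)) atTop

/-- Transience of the simple random walk on `G` started at `o`:
summable return probabilities. -/
def SRWTransient (G : SimpleGraph ℕ) (o : ℕ) : Prop :=
  Summable fun n : ℕ => pstep G n o o

/-- The σ-algebra on (rooted, root `0`) graphs with vertex set `ℕ`, generated by the
adjacency events. -/
instance : MeasurableSpace (SimpleGraph ℕ) :=
  MeasurableSpace.generateFrom {S | ∃ x y : ℕ, S = {G : SimpleGraph ℕ | G.Adj x y}}

/-- Isomorphism invariance of a mass-transport function. -/
def IsoInvariant (f : SimpleGraph ℕ → ℕ → ℕ → ℝ≥0∞) : Prop :=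
  ∀ (G G' : SimpleGraph ℕ) (φ : G ≃g G') (x y : ℕ), f G' (φ x) (φ y) = f G x y

/-- A measure on rooted graphs (vertex set `ℕ`, root `0`) is unimodular if it satisfies the
Mass-Transport Principle for all measurable isomorphism-invariant functions. -/
def Unimodular (μ : Measure (SimpleGraph ℕ)) : Prop :=
  ∀ f : SimpleGraph ℕ → ℕ → ℕ → ℝ≥0∞,
    Measurable (fun q : SimpleGraph ℕ × ℕ × ℕ => f q.1 q.2.1 q.2.2) → IsoInvariant f →
      ∫⁻ G, ∑' x : ℕ, f G 0 x ∂μ = ∫⁻ G, ∑' x : ℕ, f G x 0 ∂μ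

/-- Standing assumptions on base graphs: infinite (automatic: vertex set `ℕ` and connected),
connected, and of bounded degree. -/
def GoodGraph (G : SimpleGraph ℕ) : Prop :=
  G.Connected ∧ (∀ x, (G.neighborSet x).Finite) ∧ ∃ D : ℕ, ∀ x, gdeg G x ≤ D

section BRWaux
open Set MeasureTheory

noncomputable section

instance unif01_prob : IsProbabilityMeasure unif01 := by
  constructor
  rw [unif01, Measure.restrict_apply MeasurableSet.univ, Set.univ_inter, Real.volume_Ioo]
  norm_num

instance coordLaw_prob (p : PMF ℕ) : IsProbabilityMeasure (coordLaw p) := by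
  rw [coordLaw]; infer_instance

instance coordLaw_sfin (p : PMF ℕ) : SigmaFinite (coordLaw p) := by infer_instance

/-- A cylinder event given by per-coordinate rectangle constraints. -/
def cylSet (t : Finset (List ℕ)) (A : List ℕ → Set ℕ) (B : List ℕ → Set ℝ) : Set BRWOmega :=
  {ω | ∀ v ∈ t, (ω v).1 ∈ A v ∧ (ω v).2 ∈ B v}

lemma cylSet_eq_preimage (t : Finset (List ℕ)) (A : List ℕ → Set ℕ) (B : List ℕ → Set ℝ) :
    cylSet t A B = (fun ω (i : t) => ω i) ⁻¹' (Set.univ.pi fun i : t => A i ×ˢ B i) := by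
  ext ω
  simp only [cylSet, Set.mem_preimage, Set.mem_pi, Set.mem_univ, forall_true_left,
    Set.mem_prod, Set.mem_setOf_eq, Subtype.forall]
  

lemma cylSet_measurableSet {t : Finset (List ℕ)} {A : List ℕ → Set ℕ} {B : List ℕ → Set ℝ}
    (hA : ∀ v, MeasurableSet (A v)) (hB : ∀ v, MeasurableSet (B v)) :
    MeasurableSet (cylSet t A B) := by
  rw [cylSet_eq_preimage]
  exact (measurable_pi_lambda _ fun i : t => measurable_pi_apply (i : List ℕ))
    (MeasurableSet.univ_pi fun i => (hA i).prod (hB i))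

lemma measurable_proj (t : Finset (List ℕ)) :
    Measurable (fun ω : BRWOmega => fun i : t => ω i) :=
  measurable_pi_lambda _ fun i => measurable_pi_apply (i : List ℕ)

/-- The basic cylinder probability formula. -/
lemma P_cylSet {p : PMF ℕ} {P : Measure BRWOmega}
    (hP : IsProductWith (fun _ : List ℕ => coordLaw p) P)
    (t : Finset (List ℕ)) {A : List ℕ → Set ℕ} {B : List ℕ → Set ℝ}
    (hA : ∀ v, MeasurableSet (A v)) (hB : ∀ v, MeasurableSet (B v)) :
    P (cylSet t A B) = ∏ v ∈ t, (p.toMeasure (A v) * unif01 (B v)) := by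
  have hS : MeasurableSet (Set.univ.pi fun i : t => A i ×ˢ B i) :=
    MeasurableSet.univ_pi fun i => (hA i).prod (hB i)
  have h1 : P (cylSet t A B)
      = Measure.map (fun ω (i : t) => ω i) P (Set.univ.pi fun i : t => A i ×ˢ B i) := by
    rw [Measure.map_apply (measurable_proj t) hS, cylSet_eq_preimage]
  rw [h1, hP.2 t, Measure.pi_pi]
  rw [← Finset.prod_coe_sort t (fun v => p.toMeasure (A v) * unif01 (B v))]
  exact Finset.prod_congr rfl fun i _ => Measure.prod_prod _ _

end
end BRWaux
section BRWauxB
open Set MeasureTheory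

noncomputable section

/-- Cylinders supported on a given set of "half-coordinates". -/
def cylIn (b : Set (List ℕ × Bool)) : Set (Set BRWOmega) :=
  {S | ∃ t : Finset (List ℕ), ∃ A : List ℕ → Set ℕ, ∃ B : List ℕ → Set ℝ,
    (∀ v, MeasurableSet (A v)) ∧ (∀ v, MeasurableSet (B v)) ∧
    (∀ v ∈ t, ((v, true) ∈ b ∨ A v = Set.univ) ∧ ((v, false) ∈ b ∨ B v = Set.univ)) ∧
    S = cylSet t A B}

lemma univ_mem_cylIn (b : Set (List ℕ × Bool)) : Set.univ ∈ cylIn b := by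
  refine ⟨∅, fun _ => Set.univ, fun _ => Set.univ, fun _ => .univ, fun _ => .univ,
    by simp, ?_⟩
  ext ω; simp [cylSet]

lemma cylIn_meas {b : Set (List ℕ × Bool)} {S : Set BRWOmega} (hS : S ∈ cylIn b) :
    MeasurableSet S := by
  obtain ⟨t, A, B, hA, hB, -, rfl⟩ := hS
  exact cylSet_measurableSet hA hB

lemma cylIn_mono {b b' : Set (List ℕ × Bool)} (h : b ⊆ b') : cylIn b ⊆ cylIn b' := by
  rintro S ⟨t, A, B, hA, hB, hsupp, rfl⟩
  exact ⟨t, A, B, hA, hB, fun v hv => ⟨(hsupp v hv).1.imp_left (@h _), (hsupp v hv).2.imp_left (@h _)⟩, rfl⟩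

open Classical in
lemma cylSet_inter (t₁ t₂ : Finset (List ℕ)) (A₁ A₂ : List ℕ → Set ℕ) (B₁ B₂ : List ℕ → Set ℝ) :
    cylSet t₁ A₁ B₁ ∩ cylSet t₂ A₂ B₂ =
      cylSet (t₁ ∪ t₂)
        (fun v => (if v ∈ t₁ then A₁ v else Set.univ) ∩ (if v ∈ t₂ then A₂ v else Set.univ))
        (fun v => (if v ∈ t₁ then B₁ v else Set.univ) ∩ (if v ∈ t₂ then B₂ v else Set.univ)) := by
  ext ω
  simp only [cylSet, Set.mem_inter_iff, Set.mem_setOf_eq, Finset.mem_union]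
  constructor
  · rintro ⟨h₁, h₂⟩ v hv
    constructor
    · constructor <;> split_ifs with h
      · exact (h₁ v h).1
      · exact Set.mem_univ _
      · exact (h₂ v h).1
      · exact Set.mem_univ _
    · constructor <;> split_ifs with h
      · exact (h₁ v h).2
      · exact Set.mem_univ _
      · exact (h₂ v h).2
      · exact Set.mem_univ _
  · intro h
    constructor
    · intro v hv
      obtain ⟨⟨ha, -⟩, ⟨hb, -⟩⟩ := h v (Or.inl hv)
      rw [if_pos hv] at ha hb
      exact ⟨ha, hb⟩
    · intro v hv
      obtain ⟨⟨-, ha⟩, ⟨-, hb⟩⟩ := h v (Or.inr hv)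
      rw [if_pos hv] at ha hb
      exact ⟨ha, hb⟩

open Classical in
lemma inter_mem_cylIn {b₁ b₂ : Set (List ℕ × Bool)} {C₁ C₂ : Set BRWOmega}
    (h₁ : C₁ ∈ cylIn b₁) (h₂ : C₂ ∈ cylIn b₂) : C₁ ∩ C₂ ∈ cylIn (b₁ ∪ b₂) := by
  obtain ⟨t₁, A₁, B₁, hA₁, hB₁, hs₁, rfl⟩ := h₁
  obtain ⟨t₂, A₂, B₂, hA₂, hB₂, hs₂, rfl⟩ := h₂
  refine ⟨t₁ ∪ t₂, _, _, ?_, ?_, ?_, cylSet_inter t₁ t₂ A₁ A₂ B₁ B₂⟩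
  · intro v
    refine MeasurableSet.inter ?_ ?_ <;> split_ifs with h
    exacts [hA₁ v, .univ, hA₂ v, .univ]
  · intro v
    refine MeasurableSet.inter ?_ ?_ <;> split_ifs with h
    exacts [hB₁ v, .univ, hB₂ v, .univ]
  · intro v hv
    constructor
    · by_cases hv₁ : v ∈ t₁
      · rcases (hs₁ v hv₁).1 with h | h
        · exact Or.inl (Or.inl h)
        · by_cases hv₂ : v ∈ t₂
          · rcases (hs₂ v hv₂).1 with h' | h'
            · exact Or.inl (Or.inr h')
            · refine Or.inr ?_
              rw [if_pos hv₁, if_pos hv₂, h, h', Set.univ_inter]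
          · refine Or.inr ?_
            rw [if_pos hv₁, if_neg hv₂, h, Set.univ_inter]
      · by_cases hv₂ : v ∈ t₂
        · rcases (hs₂ v hv₂).1 with h' | h'
          · exact Or.inl (Or.inr h')
          · refine Or.inr ?_
            rw [if_neg hv₁, if_pos hv₂, h', Set.univ_inter]
        · refine Or.inr ?_
          rw [if_neg hv₁, if_neg hv₂, Set.univ_inter]
    · by_cases hv₁ : v ∈ t₁
      · rcases (hs₁ v hv₁).2 with h | h
        · exact Or.inl (Or.inl h)
        · by_cases hv₂ : v ∈ t₂
          · rcases (hs₂ v hv₂).2 with h' | h'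
            · exact Or.inl (Or.inr h')
            · refine Or.inr ?_
              rw [if_pos hv₁, if_pos hv₂, h, h', Set.univ_inter]
          · refine Or.inr ?_
            rw [if_pos hv₁, if_neg hv₂, h, Set.univ_inter]
      · by_cases hv₂ : v ∈ t₂
        · rcases (hs₂ v hv₂).2 with h' | h'
          · exact Or.inl (Or.inr h')
          · refine Or.inr ?_
            rw [if_neg hv₁, if_pos hv₂, h', Set.univ_inter]
        · refine Or.inr ?_
          rw [if_neg hv₁, if_neg hv₂, Set.univ_inter]

lemma isPiSystem_cylIn (b : Set (List ℕ × Bool)) : IsPiSystem (cylIn b) := by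
  intro C₁ h₁ C₂ h₂ _
  have := inter_mem_cylIn h₁ h₂
  rwa [Set.union_self] at this

/-- measure of intersection of two probability-one-component rectangles -/
lemma prob_inter_univ {α : Type*} [MeasurableSpace α] (μ : Measure α) [IsProbabilityMeasure μ]
    {X Y : Set α} (h : X = Set.univ ∨ Y = Set.univ) : μ (X ∩ Y) = μ X * μ Y := by
  rcases h with rfl | rfl
  · rw [Set.univ_inter, measure_univ, one_mul]
  · rw [Set.inter_univ, measure_univ, mul_one]

open Classical in
/-- Cylinders on disjoint half-coordinate supports are independent. -/
lemma P_inter_cylIn {p : PMF ℕ} {P : Measure BRWOmega}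
    (hP : IsProductWith (fun _ : List ℕ => coordLaw p) P)
    {b₁ b₂ : Set (List ℕ × Bool)} (hdisj : Disjoint b₁ b₂)
    {C₁ C₂ : Set BRWOmega} (h₁ : C₁ ∈ cylIn b₁) (h₂ : C₂ ∈ cylIn b₂) :
    P (C₁ ∩ C₂) = P C₁ * P C₂ := by
  obtain ⟨t₁, A₁, B₁, hA₁, hB₁, hs₁, rfl⟩ := h₁
  obtain ⟨t₂, A₂, B₂, hA₂, hB₂, hs₂, rfl⟩ := h₂
  set A₁' : List ℕ → Set ℕ := fun v => if v ∈ t₁ then A₁ v else Set.univ with hA₁'def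
  set A₂' : List ℕ → Set ℕ := fun v => if v ∈ t₂ then A₂ v else Set.univ with hA₂'def
  set B₁' : List ℕ → Set ℝ := fun v => if v ∈ t₁ then B₁ v else Set.univ with hB₁'def
  set B₂' : List ℕ → Set ℝ := fun v => if v ∈ t₂ then B₂ v else Set.univ with hB₂'def
  have hA₁'m : ∀ v, MeasurableSet (A₁' v) := fun v => by
    rw [hA₁'def]; dsimp only; split_ifs; exacts [hA₁ v, .univ]
  have hA₂'m : ∀ v, MeasurableSet (A₂' v) := fun v => by
    rw [hA₂'def]; dsimp only; split_ifs; exacts [hA₂ v, .univ]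
  have hB₁'m : ∀ v, MeasurableSet (B₁' v) := fun v => by
    rw [hB₁'def]; dsimp only; split_ifs; exacts [hB₁ v, .univ]
  have hB₂'m : ∀ v, MeasurableSet (B₂' v) := fun v => by
    rw [hB₂'def]; dsimp only; split_ifs; exacts [hB₂ v, .univ]
  have key : ∀ v ∈ t₁ ∪ t₂,
      p.toMeasure (A₁' v ∩ A₂' v) * unif01 (B₁' v ∩ B₂' v)
        = (p.toMeasure (A₁' v) * unif01 (B₁' v)) * (p.toMeasure (A₂' v) * unif01 (B₂' v)) := by
    intro v _
    have hAu : A₁' v = Set.univ ∨ A₂' v = Set.univ := by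
      by_cases hv₁ : v ∈ t₁
      · by_cases hv₂ : v ∈ t₂
        · rcases (hs₁ v hv₁).1 with h | h
          · rcases (hs₂ v hv₂).1 with h' | h'
            · exact absurd h' (Set.disjoint_left.mp hdisj h)
            · exact Or.inr (by rw [hA₂'def]; simpa [hv₂] using h')
          · exact Or.inl (by rw [hA₁'def]; simpa [hv₁] using h)
        · exact Or.inr (by rw [hA₂'def]; simp [hv₂])
      · exact Or.inl (by rw [hA₁'def]; simp [hv₁])
    have hBu : B₁' v = Set.univ ∨ B₂' v = Set.univ := by
      by_cases hv₁ : v ∈ t₁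
      · by_cases hv₂ : v ∈ t₂
        · rcases (hs₁ v hv₁).2 with h | h
          · rcases (hs₂ v hv₂).2 with h' | h'
            · exact absurd h' (Set.disjoint_left.mp hdisj h)
            · exact Or.inr (by rw [hB₂'def]; simpa [hv₂] using h')
          · exact Or.inl (by rw [hB₁'def]; simpa [hv₁] using h)
        · exact Or.inr (by rw [hB₂'def]; simp [hv₂])
      · exact Or.inl (by rw [hB₁'def]; simp [hv₁])
    rw [prob_inter_univ _ hAu, prob_inter_univ _ hBu]
    ring
  have hre : cylSet t₁ A₁ B₁ ∩ cylSet t₂ A₂ B₂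
      = cylSet (t₁ ∪ t₂) (fun v => A₁' v ∩ A₂' v) (fun v => B₁' v ∩ B₂' v) :=
    cylSet_inter t₁ t₂ A₁ A₂ B₁ B₂
  rw [hre, P_cylSet hP _ (fun v => (hA₁'m v).inter (hA₂'m v)) (fun v => (hB₁'m v).inter (hB₂'m v))]
  have h₁' : cylSet t₁ A₁ B₁ = cylSet t₁ A₁' B₁' := by
    ext ω; simp only [cylSet, Set.mem_setOf_eq]
    refine forall₂_congr fun v hv => ?_
    rw [hA₁'def, hB₁'def]; simp [hv]
  have h₂' : cylSet t₂ A₂ B₂ = cylSet t₂ A₂' B₂' := by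
    ext ω; simp only [cylSet, Set.mem_setOf_eq]
    refine forall₂_congr fun v hv => ?_
    rw [hA₂'def, hB₂'def]; simp [hv]
  rw [h₁', h₂', P_cylSet hP _ hA₁'m hB₁'m, P_cylSet hP _ hA₂'m hB₂'m]
  rw [Finset.prod_congr rfl key, Finset.prod_mul_distrib]
  congr 1
  · refine (Finset.prod_subset Finset.subset_union_left fun v _ hv => ?_).symm
    rw [hA₁'def, hB₁'def]; simp [hv]
  · refine (Finset.prod_subset Finset.subset_union_right fun v _ hv => ?_).symm
    rw [hA₂'def, hB₂'def]; simp [hv]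

/-- The sigma algebra generated by a set of half-coordinates. -/
def mOf (b : Set (List ℕ × Bool)) : MeasurableSpace BRWOmega :=
  MeasurableSpace.generateFrom (cylIn b)

lemma meas_of_mOf {b : Set (List ℕ × Bool)} {S : Set BRWOmega}
    (h : MeasurableSet[mOf b] S) : MeasurableSet S := by
  have hle : mOf b ≤ (inferInstance : MeasurableSpace BRWOmega) :=
    MeasurableSpace.generateFrom_le fun S hS => cylIn_meas hS
  exact hle _ h

end
end BRWauxB
section BRWauxC
open Set MeasureTheory

noncomputable section

/-- Intersection of the events of a list of (block, event) pairs. -/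
def interL : List (Set (List ℕ × Bool) × Set BRWOmega) → Set BRWOmega
  | [] => Set.univ
  | q :: l => q.2 ∩ interL l

/-- Product of the probabilities of the events. -/
noncomputable def prodL (P : Measure BRWOmega) : List (Set (List ℕ × Bool) × Set BRWOmega) → ℝ≥0∞
  | [] => 1
  | q :: l => P q.2 * prodL P l

lemma interL_meas {L : List (Set (List ℕ × Bool) × Set BRWOmega)}
    (h : ∀ q ∈ L, MeasurableSet[mOf q.1] q.2) : MeasurableSet (interL L) := by
  induction L with
  | nil => exact .univ
  | cons q l ih =>
      exact (meas_of_mOf (h q (List.mem_cons_self))).inter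
        (ih fun q' hq' => h q' (List.mem_cons_of_mem _ hq'))

lemma prodL_le_one (P : Measure BRWOmega) [IsProbabilityMeasure P]
    (L : List (Set (List ℕ × Bool) × Set BRWOmega)) : prodL P L ≤ 1 := by
  induction L with
  | nil => exact le_refl 1
  | cons q l ih => exact mul_le_one' prob_le_one ih

/-- The central independence lemma: a cylinder together with events measurable with
respect to pairwise disjoint half-coordinate blocks multiply. -/
lemma ind_blocks {p : PMF ℕ} {P : Measure BRWOmega}
    (hP : IsProductWith (fun _ : List ℕ => coordLaw p) P) :
    ∀ L : List (Set (List ℕ × Bool) × Set BRWOmega),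
      L.Pairwise (fun q q' => Disjoint q.1 q'.1) →
      (∀ q ∈ L, MeasurableSet[mOf q.1] q.2) →
      ∀ b₀ : Set (List ℕ × Bool), (∀ q ∈ L, Disjoint b₀ q.1) →
      ∀ C ∈ cylIn b₀, P (C ∩ interL L) = P C * prodL P L := by
  have hprob : IsProbabilityMeasure P := hP.1
  intro L
  induction L with
  | nil =>
      intro _ _ b₀ _ C _
      simp [interL, prodL]
  | cons q tl ih =>
      intro hpw hmeas b₀ hdisj C hC
      obtain ⟨hq_tl, hpw_tl⟩ := List.pairwise_cons.mp hpw
      have hmeas_tl : ∀ q' ∈ tl, MeasurableSet[mOf q'.1] q'.2 :=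
        fun q' hq' => hmeas q' (List.mem_cons_of_mem _ hq')
      have hdisj_tl : ∀ q' ∈ tl, Disjoint b₀ q'.1 :=
        fun q' hq' => hdisj q' (List.mem_cons_of_mem _ hq')
      have hItl : MeasurableSet (interL tl) := interL_meas hmeas_tl
      have hCm : MeasurableSet C := cylIn_meas hC
      -- predicate for the Dynkin system argument
      have main : ∀ ⦃X : Set BRWOmega⦄, MeasurableSet[mOf q.1] X →
          P (C ∩ (X ∩ interL tl)) = P C * (P X * prodL P tl) := by
        refine @MeasurableSpace.induction_on_inter BRWOmega (mOf q.1)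
          (fun X _ => P (C ∩ (X ∩ interL tl)) = P C * (P X * prodL P tl))
          (cylIn q.1) rfl (isPiSystem_cylIn q.1) ?_ ?_ ?_ ?_
        · simp
        · -- basic cylinders
          intro C' hC'
          have hCC' : C ∩ C' ∈ cylIn (b₀ ∪ q.1) := inter_mem_cylIn hC hC'
          have hdisj' : ∀ q' ∈ tl, Disjoint (b₀ ∪ q.1) q'.1 := fun q' hq' =>
            Set.disjoint_union_left.mpr ⟨hdisj_tl q' hq', hq_tl q' hq'⟩
          have h1 : P ((C ∩ C') ∩ interL tl) = P (C ∩ C') * prodL P tl :=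
            ih hpw_tl hmeas_tl _ hdisj' _ hCC'
          have h2 : P (C ∩ C') = P C * P C' :=
            P_inter_cylIn hP (hdisj q (List.mem_cons_self)) hC hC'
          calc P (C ∩ (C' ∩ interL tl)) = P ((C ∩ C') ∩ interL tl) := by
                rw [Set.inter_assoc]
            _ = P C * (P C' * prodL P tl) := by rw [h1, h2, mul_assoc]
        · -- complements
          intro X hXm hQ
          have hXam : MeasurableSet X := meas_of_mOf hXm
          have hD : P (C ∩ interL tl) = P C * prodL P tl :=
            ih hpw_tl hmeas_tl _ hdisj_tl _ hC
          have hset1 : C ∩ (Xᶜ ∩ interL tl) = (C ∩ interL tl) \ (C ∩ (X ∩ interL tl)) := by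
            ext ω
            simp only [Set.mem_inter_iff, Set.mem_compl_iff, Set.mem_diff]
            tauto
          have hsub : C ∩ (X ∩ interL tl) ⊆ C ∩ interL tl := by
            intro ω hω; exact ⟨hω.1, hω.2.2⟩
          have hm2 : MeasurableSet (C ∩ (X ∩ interL tl)) :=
            hCm.inter (hXam.inter hItl)
          rw [hset1, measure_diff hsub hm2.nullMeasurableSet (measure_ne_top P _), hD, hQ]
          have hXc : P Xᶜ = 1 - P X := prob_compl_eq_one_sub hXam
          rw [hXc]
          have hfin : prodL P tl ≠ ⊤ := (lt_of_le_of_lt (prodL_le_one P tl) (by norm_num)).ne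
          rw [ENNReal.sub_mul (fun _ _ => hfin), one_mul]
          rw [ENNReal.mul_sub (fun _ _ => (measure_ne_top P C))]
        · -- countable disjoint unions
          intro f hfd hfm hQ
          have hfam : ∀ n, MeasurableSet (f n) := fun n => meas_of_mOf (hfm n)
          have hset : C ∩ ((⋃ n, f n) ∩ interL tl) = ⋃ n, C ∩ (f n ∩ interL tl) := by
            rw [Set.iUnion_inter, Set.inter_iUnion]
          have hdisj2 : Pairwise (Function.onFun Disjoint fun n => C ∩ (f n ∩ interL tl)) := by
            intro m n hmn
            exact Set.disjoint_left.mpr fun ω hω hω' =>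
              Set.disjoint_left.mp (hfd hmn) hω.2.1 hω'.2.1
          rw [hset, measure_iUnion hdisj2 fun n => hCm.inter ((hfam n).inter hItl),
            tsum_congr fun n => hQ n, ENNReal.tsum_mul_left, ENNReal.tsum_mul_right,
            ← measure_iUnion hfd hfam]
      exact main (hmeas q (List.mem_cons_self))

end
end BRWauxC
section BRWauxD
open Set MeasureTheory

noncomputable section

lemma measSet_gstep_fiber (G : SimpleGraph ℕ) (x y : ℕ) :
    MeasurableSet {r : ℝ | gstep G x r = y} := by
  have : {r : ℝ | gstep G x r = y}
      = (fun r : ℝ => ⌊r * (gdeg G x : ℝ)⌋₊) ⁻¹' {n | Nat.nth (fun z => G.Adj x z) n = y} := by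
    ext r; simp [gstep]
  rw [this]
  exact (Nat.measurable_floor.comp (measurable_id.mul_const _)) MeasurableSpace.measurableSet_top

lemma Measurable.gstep' {α : Type*} {m : MeasurableSpace α} (G : SimpleGraph ℕ)
    {f : α → ℕ} {g : α → ℝ} (hf : Measurable f) (hg : Measurable g) :
    Measurable fun a => gstep G (f a) (g a) := by
  refine measurable_to_countable' fun y => ?_
  have : (fun a => gstep G (f a) (g a)) ⁻¹' {y}
      = ⋃ x : ℕ, (f ⁻¹' {x} ∩ g ⁻¹' {r | gstep G x r = y}) := by
    ext a
    simp only [Set.mem_preimage, Set.mem_singleton_iff, Set.mem_iUnion, Set.mem_inter_iff,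
      Set.mem_setOf_eq]
    constructor
    · intro h; exact ⟨f a, rfl, h⟩
    · rintro ⟨x, hx, h⟩; rw [← hx] at h; exact h
  rw [this]
  exact MeasurableSet.iUnion fun x =>
    (hf (measurableSet_singleton x)).inter (hg (measSet_gstep_fiber G x y))

lemma measurable_off {b : Set (List ℕ × Bool)} {v : List ℕ} (h : (v, true) ∈ b) :
    Measurable[mOf b] fun ω : BRWOmega => (ω v).1 := by
  intro s hs
  have : (fun ω : BRWOmega => (ω v).1) ⁻¹' s = cylSet {v} (fun _ => s) (fun _ => Set.univ) := by
    ext ω; simp [cylSet]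
  rw [this]
  exact MeasurableSpace.measurableSet_generateFrom
    ⟨{v}, fun _ => s, fun _ => Set.univ, fun _ => hs, fun _ => .univ,
      fun v' hv' => by
        rw [Finset.mem_singleton] at hv'; subst hv'
        exact ⟨Or.inl h, Or.inr rfl⟩, rfl⟩

lemma measurable_seed {b : Set (List ℕ × Bool)} {v : List ℕ} (h : (v, false) ∈ b) :
    Measurable[mOf b] fun ω : BRWOmega => (ω v).2 := by
  intro s hs
  have : (fun ω : BRWOmega => (ω v).2) ⁻¹' s = cylSet {v} (fun _ => Set.univ) (fun _ => s) := by
    ext ω; simp [cylSet]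
  rw [this]
  exact MeasurableSpace.measurableSet_generateFrom
    ⟨{v}, fun _ => Set.univ, fun _ => s, fun _ => .univ, fun _ => hs,
      fun v' hv' => by
        rw [Finset.mem_singleton] at hv'; subst hv'
        exact ⟨Or.inr rfl, Or.inl h⟩, rfl⟩

lemma measSet_alive {b : Set (List ℕ × Bool)} (v : List ℕ)
    (h : ∀ i u, (i :: u) <:+ v → (u, true) ∈ b) :
    MeasurableSet[mOf b] {ω : BRWOmega | alive ω v} := by
  induction v with
  | nil =>
      have : {ω : BRWOmega | alive ω []} = Set.univ := by
        ext ω; simp [alive]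
      rw [this]; exact .univ
  | cons i v ih =>
      have hv : {ω : BRWOmega | alive ω (i :: v)}
          = ((fun ω : BRWOmega => (ω v).1) ⁻¹' {n | i < n}) ∩ {ω | alive ω v} := by
        ext ω; simp [alive, offspring]
      rw [hv]
      refine MeasurableSet.inter ?_ (ih fun j u hu => h j u (hu.trans (List.suffix_cons i v)))
      exact measurable_off (h i v (List.suffix_refl _)) (MeasurableSpace.measurableSet_top)

lemma measurable_pos {b : Set (List ℕ × Bool)} (G : SimpleGraph ℕ) (o : ℕ) (v : List ℕ)
    (h : ∀ u, u <:+ v → u ≠ [] → (u, false) ∈ b) :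
    Measurable[mOf b] fun ω : BRWOmega => pos G o ω v := by
  induction v with
  | nil => exact measurable_const
  | cons i v ih =>
      have : (fun ω : BRWOmega => pos G o ω (i :: v))
          = fun ω => gstep G (pos G o ω v) ((ω (i :: v)).2) := rfl
      rw [this]
      exact Measurable.gstep' G
        (ih fun u hu hne => h u (hu.trans (List.suffix_cons i v)) hne)
        (measurable_seed (h (i :: v) (List.suffix_refl _) (List.cons_ne_nil i v)))

lemma infinite_iff_finset (S : Set (List ℕ)) :
    S.Infinite ↔ ∀ t : Finset (List ℕ), ∃ v, v ∉ t ∧ v ∈ S := by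
  constructor
  · intro hS t
    by_contra hc
    push_neg at hc
    exact hS (t.finite_toSet.subset fun v hv => by_contra fun hvt => (hc v hvt) hv)
  · intro h hfin
    obtain ⟨v, hvt, hvS⟩ := h hfin.toFinset
    exact hvt (hfin.mem_toFinset.mpr hvS)

/-- Measurability of the "infinitely many visiting particles" event. -/
lemma measSet_visits_inf {b : Set (List ℕ × Bool)} (G : SimpleGraph ℕ) (z x : ℕ)
    (hT : ∀ u : List ℕ, (u, true) ∈ b) (hF : ∀ u : List ℕ, u ≠ [] → (u, false) ∈ b) :
    MeasurableSet[mOf b] {ω : BRWOmega | {v : List ℕ | alive ω v ∧ pos G z ω v = x}.Infinite} := by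
  have hrw : {ω : BRWOmega | {v : List ℕ | alive ω v ∧ pos G z ω v = x}.Infinite}
      = ⋂ t : Finset (List ℕ), ⋃ v : List ℕ, ⋃ (_ : v ∉ t),
          ({ω | alive ω v} ∩ ((fun ω => pos G z ω v) ⁻¹' {x})) := by
    ext ω
    simp only [Set.mem_setOf_eq, Set.mem_iInter, Set.mem_iUnion, Set.mem_inter_iff,
      Set.mem_preimage, Set.mem_singleton_iff]
    rw [infinite_iff_finset]
    constructor
    · intro h t
      obtain ⟨v, hvt, hv⟩ := h t
      exact ⟨v, hvt, hv.1, hv.2⟩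
    · intro h t
      obtain ⟨v, hvt, h1, h2⟩ := h t
      exact ⟨v, hvt, h1, h2⟩
  rw [hrw]
  refine MeasurableSet.iInter fun t => MeasurableSet.iUnion fun v => MeasurableSet.iUnion fun _ =>
    MeasurableSet.inter ?_ ?_
  · exact measSet_alive v fun i u _ => hT u
  · exact measurable_pos G z v (fun u _ hne => hF u hne) (measurableSet_singleton x)

end
end BRWauxD
section BRWauxE
open Set MeasureTheory

noncomputable section

/-- The subtree shift: the randomness of the subtree rooted at `w`. -/
def shiftT (w : List ℕ) (ω : BRWOmega) : BRWOmega := fun v => ω (v ++ w)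

lemma measurable_shiftT (w : List ℕ) : Measurable (shiftT w) :=
  measurable_pi_lambda _ fun v => measurable_pi_apply (v ++ w)

lemma alive_shiftT {ω : BRWOmega} {w : List ℕ} (hw : alive ω w) :
    ∀ u : List ℕ, alive (shiftT w ω) u ↔ alive ω (u ++ w) := by
  intro u
  induction u with
  | nil => simpa [alive] using hw
  | cons i u ih =>
      show (i < offspring (shiftT w ω) u ∧ alive (shiftT w ω) u)
        ↔ (i < offspring ω (u ++ w) ∧ alive ω (u ++ w))
      exact and_congr Iff.rfl ih

lemma pos_shiftT (G : SimpleGraph ℕ) (o : ℕ) (ω : BRWOmega) (w : List ℕ) :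
    ∀ u : List ℕ, pos G (pos G o ω w) (shiftT w ω) u = pos G o ω (u ++ w) := by
  intro u
  induction u with
  | nil => rfl
  | cons i u ih =>
      show gstep G (pos G (pos G o ω w) (shiftT w ω) u) ((ω ((i :: u) ++ w)).2)
        = gstep G (pos G o ω (u ++ w)) ((ω (i :: (u ++ w))).2)
      rw [ih, List.cons_append]

/-- Uniqueness of a measure with given finite-dimensional product marginals. -/
lemma isProductWith_unique {ν : List ℕ → Measure (ℕ × ℝ)} {P₁ P₂ : Measure BRWOmega}
    (h₁ : IsProductWith ν P₁) (h₂ : IsProductWith ν P₂) : P₁ = P₂ := by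
  haveI := h₁.1; haveI := h₂.1
  refine ext_of_generate_finite (measurableCylinders fun _ : List ℕ => ℕ × ℝ)
    generateFrom_measurableCylinders.symm isPiSystem_measurableCylinders ?_ ?_
  · intro s hs
    obtain ⟨t, S, hS, rfl⟩ := (mem_measurableCylinders s).mp hs
    show P₁ ((fun ω (i : t) => ω i) ⁻¹' S) = P₂ ((fun ω (i : t) => ω i) ⁻¹' S)
    rw [← Measure.map_apply (measurable_proj t) hS, ← Measure.map_apply (measurable_proj t) hS,
      h₁.2 t, h₂.2 t]
  · rw [measure_univ, measure_univ]

/-- The shift is measure preserving. -/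
lemma map_shiftT_eq {p : PMF ℕ} {P : Measure BRWOmega}
    (hP : IsProductWith (fun _ : List ℕ => coordLaw p) P) (w : List ℕ) :
    Measure.map (shiftT w) P = P := by
  haveI := hP.1
  refine isProductWith_unique (ν := fun _ => coordLaw p) ⟨?_, ?_⟩ hP
  · exact Measure.isProbabilityMeasure_map (measurable_shiftT w).aemeasurable
  · intro t
    set t' : Finset (List ℕ) := t.image (· ++ w) with ht'
    have hmem : ∀ i : t, (i : List ℕ) ++ w ∈ t' := fun i =>
      Finset.mem_image_of_mem _ i.2
    set g : (t' → ℕ × ℝ) → (t → ℕ × ℝ) := fun f i => f ⟨(i : List ℕ) ++ w, hmem i⟩ with hg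
    have hgm : Measurable g := measurable_pi_lambda _ fun i => measurable_pi_apply _
    have hcomp : (fun ω (i : t) => ω i) ∘ shiftT w = g ∘ (fun ω (i : t') => ω i) := rfl
    rw [Measure.map_map (measurable_proj t) (measurable_shiftT w), hcomp,
      ← Measure.map_map hgm (measurable_proj t'), hP.2 t']
    -- the bijection
    have hinj : Function.Injective (fun i : t => (⟨(i : List ℕ) ++ w, hmem i⟩ : t')) := by
      intro i j hij
      apply Subtype.ext
      exact List.append_cancel_right (congrArg Subtype.val hij)
    have hsurj : Function.Surjective (fun i : t => (⟨(i : List ℕ) ++ w, hmem i⟩ : t')) := by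
      rintro ⟨i', hi'⟩
      rw [ht'] at hi'
      obtain ⟨a, ha, hai⟩ := Finset.mem_image.mp hi'
      exact ⟨⟨a, ha⟩, Subtype.ext hai⟩
    set e : t ≃ t' := Equiv.ofBijective _ ⟨hinj, hsurj⟩ with he
    have hge : ∀ (f : t' → ℕ × ℝ) (i : t), g f i = f (e i) := fun f i => rfl
    refine (Measure.pi_eq fun s hs => ?_).symm
    rw [Measure.map_apply hgm (MeasurableSet.univ_pi hs)]
    have hpre : g ⁻¹' Set.univ.pi s = Set.univ.pi fun i' : t' => s (e.symm i') := by
      ext f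
      simp only [Set.mem_preimage, Set.mem_pi, Set.mem_univ, forall_true_left]
      constructor
      · intro h i'
        have := h (e.symm i')
        rwa [hge, Equiv.apply_symm_apply] at this
      · intro h i
        rw [hge]
        have := h (e i)
        rwa [Equiv.symm_apply_apply] at this
    rw [hpre, Measure.pi_pi]
    exact Equiv.prod_comp e.symm fun i : t => coordLaw p (s i)

lemma P_shiftT_preimage {p : PMF ℕ} {P : Measure BRWOmega}
    (hP : IsProductWith (fun _ : List ℕ => coordLaw p) P) (w : List ℕ)
    {S : Set BRWOmega} (hS : MeasurableSet S) :
    P (shiftT w ⁻¹' S) = P S := by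
  conv_rhs => rw [← map_shiftT_eq hP w]
  rw [Measure.map_apply (measurable_shiftT w) hS]

/-- Half-coordinates of the subtree rooted at `w`. -/
def blockOf (w : List ℕ) : Set (List ℕ × Bool) := {q | ∃ u : List ℕ, q.1 = u ++ w}

lemma measurable_shiftT_mOf (w : List ℕ) :
    @Measurable BRWOmega BRWOmega (mOf (blockOf w)) _ (shiftT w) := by
  refine @measurable_pi_lambda BRWOmega (List ℕ) (fun _ => ℕ × ℝ) (mOf (blockOf w)) _ _
    fun v => ?_
  have h1 : (v ++ w, true) ∈ blockOf w := ⟨v, rfl⟩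
  have h2 : (v ++ w, false) ∈ blockOf w := ⟨v, rfl⟩
  have : (fun ω : BRWOmega => shiftT w ω v)
      = fun ω : BRWOmega => ((ω (v ++ w)).1, (ω (v ++ w)).2) := by
    funext ω; exact (Prod.mk.eta).symm
  rw [this]
  exact Measurable.prodMk (measurable_off h1) (measurable_seed h2)

lemma measSet_shiftT_preimage (w : List ℕ) {S : Set BRWOmega} (hS : MeasurableSet S) :
    MeasurableSet[mOf (blockOf w)] (shiftT w ⁻¹' S) :=
  measurable_shiftT_mOf w hS

end
end BRWauxE
section BRWauxF
open Set MeasureTheory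

noncomputable section

variable {G : SimpleGraph ℕ}

lemma walk_head_adj : ∀ {u v : ℕ}, G.Walk u v → u ≠ v → ∃ y, G.Adj u y := by
  intro u v wk hne
  cases wk with
  | nil => exact absurd rfl hne
  | cons h _ => exact ⟨_, h⟩

lemma exists_adj (hconn : G.Connected) (x : ℕ) : ∃ y, G.Adj x y := by
  obtain ⟨wk⟩ := hconn.preconnected x (x + 1)
  exact walk_head_adj wk (by omega)

lemma gdeg_pos (hconn : G.Connected) (hfin : (G.neighborSet x).Finite) : 0 < gdeg G x := by
  rw [gdeg, Set.ncard_pos hfin]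
  obtain ⟨y, hy⟩ := exists_adj hconn x
  exact ⟨y, hy⟩

lemma neighborSet_eq_setOf (x : ℕ) : G.neighborSet x = {y | G.Adj x y} := rfl

lemma gstep_adj (hconn : G.Connected) (hfin : (G.neighborSet x).Finite)
    {r : ℝ} (hr : r ∈ Set.Ioo (0 : ℝ) 1) : G.Adj x (gstep G x r) := by
  have hd : 0 < gdeg G x := gdeg_pos hconn hfin
  have hfin' : {y | G.Adj x y}.Finite := hfin
  have hcard : hfin'.toFinset.card = gdeg G x := by
    rw [gdeg]; exact (Set.ncard_eq_toFinset_card _ hfin').symm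
  have hflt : ⌊r * (gdeg G x : ℝ)⌋₊ < hfin'.toFinset.card := by
    rw [hcard]
    rw [Nat.floor_lt (mul_nonneg hr.1.le (Nat.cast_nonneg _))]
    calc r * (gdeg G x : ℝ) < 1 * (gdeg G x : ℝ) := by
          exact mul_lt_mul_of_pos_right hr.2 (by exact_mod_cast hd)
      _ = (gdeg G x : ℝ) := one_mul _
  exact Nat.nth_mem_of_lt_card hfin' hflt

open Classical in
/-- Forcing interval: there is a sub-interval of (0,1) of positive measure on which the
random-walk step from `x` goes exactly to the given neighbour `y`. -/
lemma exists_force_interval (hconn : G.Connected) (hfin : (G.neighborSet x).Finite)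
    {y : ℕ} (hAdj : G.Adj x y) :
    ∃ I : Set ℝ, I ⊆ Set.Ioo (0 : ℝ) 1 ∧ MeasurableSet I ∧ 0 < unif01 I ∧
      ∀ r ∈ I, gstep G x r = y := by
  have hd : 0 < gdeg G x := gdeg_pos hconn hfin
  have hdr : (0 : ℝ) < (gdeg G x : ℝ) := by exact_mod_cast hd
  have hfin' : {z | G.Adj x z}.Finite := hfin
  set l : ℕ := Nat.count (fun z => G.Adj x z) y with hl
  have hnth : Nat.nth (fun z => G.Adj x z) l = y := Nat.nth_count hAdj
  have hlc : l < gdeg G x := by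
    have h1 := Nat.count_lt_card hfin' hAdj
    have h2 : hfin'.toFinset.card = gdeg G x := by
      rw [gdeg]; exact (Set.ncard_eq_toFinset_card _ hfin').symm
    omega
  refine ⟨Set.Ioo ((l : ℝ) / gdeg G x) ((l + 1 : ℝ) / gdeg G x), ?_, measurableSet_Ioo, ?_, ?_⟩
  · intro r hr
    constructor
    · exact lt_of_le_of_lt (div_nonneg (Nat.cast_nonneg _) hdr.le) hr.1
    · refine lt_of_lt_of_le hr.2 ?_
      rw [div_le_one hdr]
      exact_mod_cast hlc
  · have hsub : Set.Ioo ((l : ℝ) / gdeg G x) ((l + 1 : ℝ) / gdeg G x) ⊆ Set.Ioo (0:ℝ) 1 := by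
      intro r hr
      constructor
      · exact lt_of_le_of_lt (div_nonneg (Nat.cast_nonneg _) hdr.le) hr.1
      · refine lt_of_lt_of_le hr.2 ?_
        rw [div_le_one hdr]
        exact_mod_cast hlc
    rw [unif01, Measure.restrict_apply measurableSet_Ioo,
      Set.inter_eq_self_of_subset_left hsub, Real.volume_Ioo]
    rw [ENNReal.ofReal_pos]
    rw [div_sub_div_same]
    have : (l : ℝ) + 1 - l = 1 := by ring
    rw [this]
    positivity
  · intro r hr
    have h1 : (l : ℝ) < r * gdeg G x := by
      have := hr.1
      rwa [div_lt_iff₀ hdr] at this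
    have h2 : r * (gdeg G x : ℝ) < (l : ℝ) + 1 := by
      have := hr.2
      rwa [lt_div_iff₀ hdr] at this
    have hfl : ⌊r * (gdeg G x : ℝ)⌋₊ = l := by
      rw [Nat.floor_eq_iff (le_trans (Nat.cast_nonneg l) h1.le)]
      exact ⟨h1.le, h2⟩
    rw [gstep, hfl, hnth]

lemma adj_dist_le (hconn : G.Connected) {x y : ℕ} (h : G.Adj x y) (o : ℕ) :
    G.dist o y ≤ G.dist o x + 1 := by
  refine le_trans (hconn.dist_triangle (v := x)) ?_
  have : G.dist x y ≤ 1 := by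
    have := SimpleGraph.dist_le (SimpleGraph.Walk.cons h SimpleGraph.Walk.nil)
    simpa using this
  omega

lemma penultimate (hconn : G.Connected) {y : ℕ} {n : ℕ} (h : G.dist 0 y = n + 1) :
    ∃ x, G.Adj x y ∧ G.dist 0 x = n := by
  obtain ⟨p, hp⟩ := (hconn.preconnected 0 y).exists_walk_length_eq_dist
  obtain ⟨x, hadj, q, hq⟩ : ∃ x, ∃ _ : G.Adj y x, ∃ q : G.Walk x 0, q.length = n := by
    cases hrev : p.reverse with
    | nil =>
        exfalso
        have := congrArg (SimpleGraph.Walk.length) hrev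
        rw [SimpleGraph.Walk.length_reverse, hp, h] at this
        simp at this
    | cons hadj q =>
        refine ⟨_, hadj, q, ?_⟩
        have := congrArg (SimpleGraph.Walk.length) hrev
        rw [SimpleGraph.Walk.length_reverse, hp, h] at this
        simp only [SimpleGraph.Walk.length_cons] at this
        omega
  refine ⟨x, hadj.symm, ?_⟩
  have h1 : G.dist 0 x ≤ n := by
    have := SimpleGraph.dist_le q.reverse
    rwa [SimpleGraph.Walk.length_reverse, hq] at this
  have h2 : n ≤ G.dist 0 x := by
    have := adj_dist_le hconn hadj.symm 0
    omega
  omega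

/-- The closed ball of radius `k` around the root `0`. -/
def gball (G : SimpleGraph ℕ) (k : ℕ) : Set ℕ := {y | G.dist 0 y ≤ k}

lemma gball_finite (hconn : G.Connected) (hfin : ∀ x, (G.neighborSet x).Finite) :
    ∀ k, (gball G k).Finite := by
  intro k
  induction k with
  | zero =>
      refine Set.Finite.subset (Set.finite_singleton 0) ?_
      intro y hy
      have h0 : G.dist 0 y = 0 := Nat.le_zero.mp hy
      rcases SimpleGraph.dist_eq_zero_iff_eq_or_not_reachable.mp h0 with h | h
      · simp [h.symm]
      · exact absurd (hconn.preconnected 0 y) h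
  | succ k ih =>
      have hsub : gball G (k+1) ⊆ gball G k ∪ ⋃ x ∈ gball G k, G.neighborSet x := by
        intro y hy
        by_cases hle : G.dist 0 y ≤ k
        · exact Or.inl hle
        · have hd : G.dist 0 y = k + 1 := by
            have : G.dist 0 y ≤ k + 1 := hy
            omega
          obtain ⟨x, hadj, hx⟩ := penultimate hconn hd
          refine Or.inr ?_
          refine Set.mem_biUnion (show x ∈ gball G k from hx.le) ?_
          exact hadj
      exact Set.Finite.subset (ih.union (Set.Finite.biUnion ih fun x _ => hfin x)) hsub

lemma exists_geodesic (hconn : G.Connected) :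
    ∀ (n : ℕ) (s : ℕ), G.dist 0 s = n →
      ∃ g : ℕ → ℕ, g 0 = 0 ∧ g n = s ∧ (∀ m < n, G.Adj (g m) (g (m + 1))) ∧
        ∀ m ≤ n, G.dist 0 (g m) = m := by
  intro n
  induction n with
  | zero =>
      intro s h
      have hs : s = 0 := by
        rcases SimpleGraph.dist_eq_zero_iff_eq_or_not_reachable.mp h with h' | h'
        · exact h'.symm
        · exact absurd (hconn.preconnected 0 s) h'
      subst hs
      exact ⟨fun _ => 0, rfl, rfl, fun m hm => absurd hm (Nat.not_lt_zero m),
        fun m hm => by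
          have : m = 0 := Nat.le_zero.mp hm
          subst this
          exact SimpleGraph.dist_self⟩
  | succ n ih =>
      intro s h
      obtain ⟨x, hadj, hx⟩ := penultimate hconn h
      obtain ⟨g', hg0, hgn, hgadj, hgdist⟩ := ih x hx
      refine ⟨fun m => if m ≤ n then g' m else s, by simp [hg0], by simp, ?_, ?_⟩
      · intro m hm
        by_cases hmn : m < n
        · have h1 : m ≤ n := hmn.le
          have h2 : m + 1 ≤ n := hmn
          simp only [if_pos h1, if_pos h2]
          exact hgadj m hmn
        · have hmeq : m = n := by omega
          subst hmeq
          show G.Adj (if m ≤ m then g' m else s) (if m + 1 ≤ m then g' (m+1) else s)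
          rw [if_pos (le_refl m), if_neg (by omega : ¬ (m + 1 ≤ m)), hgn]
          exact hadj
      · intro m hm
        by_cases hmn : m ≤ n
        · simp only [if_pos hmn]
          exact hgdist m hmn
        · have : m = n + 1 := by omega
          subst this
          simp only [if_neg hmn]
          exact h

lemma exists_pmf_pos (p : PMF ℕ) (hp0 : p 0 = 0) : ∃ j : ℕ, 0 < j ∧ p j ≠ 0 := by
  by_contra hc
  push_neg at hc
  have hall : ∀ j, p j = 0 := by
    intro j
    cases j with
    | zero => exact hp0
    | succ m => exact hc (m+1) (Nat.succ_pos m)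
  have := p.tsum_coe
  rw [tsum_congr fun j => by rw [hall j]] at this
  rw [tsum_zero] at this
  exact zero_ne_one this

end
end BRWauxF
section BRWauxG
open Set MeasureTheory

noncomputable section

/-- Particles of the BRW started at `z` sitting at `x`. -/
def visitSet (G : SimpleGraph ℕ) (z x : ℕ) (ω : BRWOmega) : Set (List ℕ) :=
  {v : List ℕ | alive ω v ∧ pos G z ω v = x}

def VinfSet (G : SimpleGraph ℕ) (z x : ℕ) : Set BRWOmega :=
  {ω | (visitSet G z x ω).Infinite}

lemma VinfSet_self (G : SimpleGraph ℕ) (x : ℕ) :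
    VinfSet G x x = {ω | VisitsInf G x ω} := rfl

/-- spine encodings -/
abbrev sp (m : ℕ) : List ℕ := List.replicate m 0

lemma sp_succ (m : ℕ) : sp (m + 1) = 0 :: sp m := rfl

lemma sp_length (m : ℕ) : (sp m).length = m := List.length_replicate

lemma sp_inj : Function.Injective sp := fun m n h => by
  have := congrArg List.length h
  rwa [sp_length, sp_length] at this

lemma suffix_sp {u : List ℕ} {n : ℕ} (h : u <:+ sp n) : u = sp u.length ∧ u.length ≤ n := by
  obtain ⟨t, ht⟩ := h
  constructor
  · refine List.eq_replicate_length.mpr fun b hb => ?_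
    have : b ∈ sp n := by
      rw [← ht]
      exact List.mem_append.mpr (Or.inr hb)
    exact List.eq_of_mem_replicate this
  · have := congrArg List.length ht
    rw [List.length_append, sp_length] at this
    omega

/-- ambient measurability of the visit sets -/
lemma measSet_VinfSet (G : SimpleGraph ℕ) (z x : ℕ) : MeasurableSet (VinfSet G z x) := by
  refine meas_of_mOf (b := Set.univ) ?_
  exact measSet_visits_inf G z x (fun _ => trivial) (fun _ _ => trivial)

/-- The key "bridge" lemma: if the BRW started at `x` a.s. returns to `x` only finitely
often, then the BRW started at any `z` a.s. visits `x` only finitely often. -/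
lemma vinf_zero_from_any {p : PMF ℕ} {P : Measure BRWOmega}
    (hP : IsProductWith (fun _ : List ℕ => coordLaw p) P) (hp0 : p 0 = 0)
    {G : SimpleGraph ℕ} (hconn : G.Connected) (hfin : ∀ y, (G.neighborSet y).Finite)
    {x : ℕ} (htr : P {ω | VisitsInf G x ω} = 0) (z : ℕ) :
    P (VinfSet G z x) = 0 := by
  haveI := hP.1
  -- a walk from x to z
  obtain ⟨wk⟩ := hconn.preconnected x z
  by_cases hd0 : wk.length = 0
  · have : z = x := by
      cases wk with
      | nil => rfl
      | cons h q => simp [SimpleGraph.Walk.length_cons] at hd0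
    subst this
    rw [VinfSet_self]
    exact htr
  set d := wk.length with hdd
  have hd : 1 ≤ d := Nat.one_le_iff_ne_zero.mpr hd0
  set f : ℕ → ℕ := fun m => wk.getVert m with hf
  have hf0 : f 0 = x := SimpleGraph.Walk.getVert_zero wk
  have hfd : f d = z := SimpleGraph.Walk.getVert_length wk
  have hadj : ∀ m, m < d → G.Adj (f m) (f (m + 1)) := fun m hm =>
    SimpleGraph.Walk.adj_getVert_succ wk hm
  -- forcing intervals
  have hIex : ∀ m : ℕ, ∃ I : Set ℝ, I ⊆ Set.Ioo (0:ℝ) 1 ∧ MeasurableSet I ∧ 0 < unif01 I ∧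
      (m < d → ∀ r ∈ I, gstep G (f m) r = f (m + 1)) := by
    intro m
    by_cases hm : m < d
    · obtain ⟨I, h1, h2, h3, h4⟩ := exists_force_interval hconn (hfin (f m)) (hadj m hm)
      exact ⟨I, h1, h2, h3, fun _ => h4⟩
    · refine ⟨Set.Ioo 0 1, subset_rfl, measurableSet_Ioo, ?_, fun h => absurd h hm⟩
      rw [unif01, Measure.restrict_apply measurableSet_Ioo, Set.inter_self, Real.volume_Ioo]
      norm_num
  choose I hIsub hImeas hIpos hIforce using hIex
  -- the cylinder event: spine seeds forced along the walk for the first d-1 steps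
  set t₀ : Finset (List ℕ) := (Finset.Icc 1 (d - 1)).image sp with ht₀
  set B₀ : List ℕ → Set ℝ := fun v => I (v.length - 1) with hB₀
  set C₀ : Set BRWOmega := cylSet t₀ (fun _ => Set.univ) B₀ with hC₀
  set b₀ : Set (List ℕ × Bool) :=
    {q | q.2 = false ∧ ∃ m, 1 ≤ m ∧ m ≤ d - 1 ∧ q.1 = sp m} with hb₀
  have hC₀mem : C₀ ∈ cylIn b₀ := by
    refine ⟨t₀, fun _ => Set.univ, B₀, fun _ => .univ, fun v => hImeas _, ?_, rfl⟩
    intro v hv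
    rw [ht₀] at hv
    obtain ⟨m, hm, rfl⟩ := Finset.mem_image.mp hv
    rw [Finset.mem_Icc] at hm
    exact ⟨Or.inr rfl, Or.inl ⟨rfl, m, hm.1, hm.2, rfl⟩⟩
  -- the subtree block event
  set Vtil : Set BRWOmega := VinfSet G z x with hVtil
  set Ahat : Set BRWOmega := {ω' | (ω' []).2 ∈ I (d - 1)} ∩ Vtil with hAhat
  have hAhatMeas : MeasurableSet Ahat := by
    refine MeasurableSet.inter ?_ (measSet_VinfSet G z x)
    exact (measurable_pi_apply ([] : List ℕ)).snd (hImeas (d-1))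
  set X : Set BRWOmega := shiftT (sp d) ⁻¹' Ahat with hX
  have hXmeas : MeasurableSet[mOf (blockOf (sp d))] X :=
    measSet_shiftT_preimage (sp d) hAhatMeas
  have hdisj : Disjoint b₀ (blockOf (sp d)) := by
    rw [Set.disjoint_left]
    rintro ⟨v, c⟩ ⟨hc, m, hm1, hm2, hv⟩ ⟨u, hu⟩
    simp only at hv hu
    rw [hv] at hu
    have := congrArg List.length hu
    rw [sp_length, List.length_append, sp_length] at this
    omega
  -- independence
  have hind : P (C₀ ∩ X) = P C₀ * P X := by
    have := ind_blocks hP [(blockOf (sp d), X)]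
      (List.pairwise_singleton _ _)
      (by
        intro q hq
        rw [List.mem_singleton] at hq
        subst hq
        exact hXmeas)
      b₀
      (by
        intro q hq
        rw [List.mem_singleton] at hq
        subst hq
        exact hdisj)
      C₀ hC₀mem
    simp only [interL, prodL, Set.inter_univ, mul_one] at this
    exact this
  have hPX : P X = P Ahat := P_shiftT_preimage hP (sp d) hAhatMeas
  -- split off the seed of the root inside Ahat
  have hPAhat : P Ahat = unif01 (I (d - 1)) * P Vtil := by
    set b₀' : Set (List ℕ × Bool) := {(([] : List ℕ), false)} with hb₀'
    set b₁ : Set (List ℕ × Bool) := {q | q.1 ≠ [] ∨ q.2 = true} with hb₁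
    set C' : Set BRWOmega := cylSet {([] : List ℕ)} (fun _ => Set.univ) (fun _ => I (d-1))
      with hC'
    have hC'mem : C' ∈ cylIn b₀' := by
      refine ⟨{[]}, fun _ => Set.univ, fun _ => I (d-1), fun _ => .univ, fun _ => hImeas _,
        ?_, rfl⟩
      intro v hv
      rw [Finset.mem_singleton] at hv
      subst hv
      exact ⟨Or.inr rfl, Or.inl rfl⟩
    have hVmeas : MeasurableSet[mOf b₁] Vtil := by
      rw [hVtil, VinfSet]
      exact measSet_visits_inf G z x (fun u => Or.inr rfl) (fun u hu => Or.inl hu)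
    have hdisj' : Disjoint b₀' b₁ := by
      rw [Set.disjoint_left]
      rintro q hq hq'
      rw [hb₀', Set.mem_singleton_iff] at hq
      subst hq
      rcases hq' with h | h
      · exact h rfl
      · simp at h
    have h1 := ind_blocks hP [(b₁, Vtil)]
      (List.pairwise_singleton _ _)
      (by
        intro q hq
        rw [List.mem_singleton] at hq
        subst hq
        exact hVmeas)
      b₀'
      (by
        intro q hq
        rw [List.mem_singleton] at hq
        subst hq
        exact hdisj')
      C' hC'mem
    simp only [interL, prodL, Set.inter_univ, mul_one] at h1
    have hset : Ahat = C' ∩ Vtil := by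
      rw [hAhat, hC']
      congr 1
      ext ω
      simp [cylSet]
    have hPC' : P C' = unif01 (I (d-1)) := by
      rw [hC', P_cylSet hP _ (fun _ => .univ) (fun _ => hImeas _), Finset.prod_singleton,
        measure_univ, one_mul]
    rw [hset, h1, hPC']
  -- the a.s. event: spine offspring are nonzero
  set N : Set BRWOmega := {ω | ∀ m, m < d → 1 ≤ offspring ω (sp m)} with hN
  have hNc : P Nᶜ = 0 := by
    have hsub : Nᶜ ⊆ ⋃ m ∈ Finset.range d, {ω : BRWOmega | offspring ω (sp m) = 0} := by
      intro ω hω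
      rw [hN] at hω
      simp only [Set.mem_compl_iff, Set.mem_setOf_eq, not_forall] at hω
      obtain ⟨m, hm, hm0⟩ := hω
      refine Set.mem_biUnion (Finset.mem_range.mpr hm) ?_
      simp only [Set.mem_setOf_eq]
      omega
    refine measure_mono_null hsub ?_
    refine (measure_biUnion_null_iff (Finset.range d).countable_toSet).mpr fun m _ => ?_
    have : {ω : BRWOmega | offspring ω (sp m) = 0}
        = cylSet {sp m} (fun _ => {0}) (fun _ => Set.univ) := by
      ext ω
      simp [cylSet, offspring]
    rw [this, P_cylSet hP _ (fun _ => measurableSet_singleton 0) (fun _ => .univ),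
      Finset.prod_singleton, measure_univ, mul_one,
      PMF.toMeasure_apply_singleton _ _ (measurableSet_singleton 0), hp0]
  -- inclusion into the visits-infinitely-often event
  have hincl : C₀ ∩ X ∩ N ⊆ {ω | VisitsInf G x ω} := by
    rintro ω ⟨⟨hωC, hωX⟩, hωN⟩
    have halive : ∀ m, m ≤ d → alive ω (sp m) := by
      intro m hm
      induction m with
      | zero => trivial
      | succ n ih =>
          rw [sp_succ]
          exact ⟨hωN n (by omega), ih (by omega)⟩
    have hseed : ∀ m, 1 ≤ m → m ≤ d → (ω (sp m)).2 ∈ I (m - 1) := by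
      intro m hm1 hmd
      by_cases hmd' : m ≤ d - 1
      · have hmem : sp m ∈ t₀ := by
          rw [ht₀]
          exact Finset.mem_image_of_mem sp (Finset.mem_Icc.mpr ⟨hm1, hmd'⟩)
        have := (hωC (sp m) hmem).2
        simp only [hB₀, sp_length] at this
        exact this
      · have hmeq : m = d := by omega
        subst hmeq
        have := hωX.1
        simpa [shiftT] using this
    have hpos : ∀ m, m ≤ d → pos G x ω (sp m) = f m := by
      intro m hm
      induction m with
      | zero => exact hf0.symm ▸ rfl
      | succ n ih =>
          have hstep : pos G x ω (sp (n+1)) = gstep G (pos G x ω (sp n)) ((ω (sp (n+1))).2) :=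
            rfl
          rw [hstep, ih (by omega)]
          have hseedn := hseed (n+1) (by omega) hm
          have : (n + 1) - 1 = n := by omega
          rw [this] at hseedn
          exact hIforce n (by omega) _ hseedn
    -- the subtree visits x infinitely often
    have hVsub : (visitSet G z x (shiftT (sp d) ω)).Infinite := hωX.2
    have hincl2 : (fun u => u ++ sp d) '' visitSet G z x (shiftT (sp d) ω)
        ⊆ visitSet G x x ω := by
      rintro v ⟨u, hu, rfl⟩
      constructor
      · exact (alive_shiftT (halive d le_rfl) u).mp hu.1
      · rw [← pos_shiftT G x ω (sp d) u, hpos d le_rfl, hfd]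
        exact hu.2
    have : (visitSet G x x ω).Infinite := by
      refine Set.Infinite.mono hincl2 ?_
      exact Set.Infinite.image
        (Set.injOn_of_injective (fun a b hab => List.append_cancel_right hab)) hVsub
    exact this
  -- wrap up
  have hzero : P (C₀ ∩ X) = 0 := by
    have h1 : P ((C₀ ∩ X) ∩ N) ≤ P {ω | VisitsInf G x ω} := measure_mono hincl
    rw [htr] at h1
    have h2 : P (C₀ ∩ X) ≤ P ((C₀ ∩ X) ∩ N) + P ((C₀ ∩ X) ∩ Nᶜ) := by
      refine le_trans (measure_mono ?_) (measure_union_le _ _)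
      intro ω hω
      by_cases hωN : ω ∈ N
      · exact Or.inl ⟨hω, hωN⟩
      · exact Or.inr ⟨hω, hωN⟩
    have h3 : P ((C₀ ∩ X) ∩ Nᶜ) ≤ P Nᶜ := measure_mono Set.inter_subset_right
    rw [hNc] at h3
    have := le_trans h2 (add_le_add h1 h3)
    simpa using this
  rw [hind, hPX, hPAhat] at hzero
  have hPC₀ : P C₀ ≠ 0 := by
    rw [hC₀, P_cylSet hP _ (fun _ => .univ) (fun v => hImeas _)]
    refine (CanonicallyOrderedAdd.prod_pos.mpr fun v hv => ?_).ne'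
    rw [measure_univ, one_mul]
    exact hIpos _
  have hIne : unif01 (I (d-1)) ≠ 0 := (hIpos (d-1)).ne'
  rcases mul_eq_zero.mp hzero with h | h
  · exact absurd h hPC₀
  · rcases mul_eq_zero.mp h with h' | h'
    · exact absurd h' hIne
    · exact h'

end
end BRWauxG
section BRWauxH
open Set MeasureTheory

noncomputable section

lemma aliveMeas (v : List ℕ) : MeasurableSet {ω : BRWOmega | alive ω v} :=
  meas_of_mOf (measSet_alive (b := Set.univ) v fun _ _ _ => trivial)

lemma posMeas (G : SimpleGraph ℕ) (o : ℕ) (v : List ℕ) :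
    Measurable fun ω : BRWOmega => pos G o ω v := by
  have h := measurable_pos (b := Set.univ) G o v fun _ _ _ => trivial
  exact h.mono (MeasurableSpace.generateFrom_le fun S hS => cylIn_meas hS) le_rfl

lemma P_off_zero {p : PMF ℕ} {P : Measure BRWOmega}
    (hP : IsProductWith (fun _ : List ℕ => coordLaw p) P) (hp0 : p 0 = 0) (v : List ℕ) :
    P {ω : BRWOmega | offspring ω v = 0} = 0 := by
  have : {ω : BRWOmega | offspring ω v = 0}
      = cylSet {v} (fun _ => {0}) (fun _ => Set.univ) := by
    ext ω; simp [cylSet, offspring]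
  rw [this, P_cylSet hP _ (fun _ => measurableSet_singleton 0) (fun _ => .univ),
    Finset.prod_singleton, measure_univ, mul_one,
    PMF.toMeasure_apply_singleton _ _ (measurableSet_singleton 0), hp0]

lemma P_seed_out {p : PMF ℕ} {P : Measure BRWOmega}
    (hP : IsProductWith (fun _ : List ℕ => coordLaw p) P) (v : List ℕ) :
    P {ω : BRWOmega | (ω v).2 ∉ Set.Ioo (0:ℝ) 1} = 0 := by
  have : {ω : BRWOmega | (ω v).2 ∉ Set.Ioo (0:ℝ) 1}
      = cylSet {v} (fun _ => Set.univ) (fun _ => (Set.Ioo (0:ℝ) 1)ᶜ) := by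
    ext ω; simp [cylSet]
  rw [this, P_cylSet hP _ (fun _ => .univ) (fun _ => measurableSet_Ioo.compl),
    Finset.prod_singleton, measure_univ, one_mul, unif01,
    Measure.restrict_apply measurableSet_Ioo.compl, Set.compl_inter_self, measure_empty]

/-- The avoidance event: starting at `s`, no particle other than the root ever enters the
ball of radius `k` around the origin. -/
def avoidSet (G : SimpleGraph ℕ) (k : ℕ) (s : ℕ) : Set BRWOmega :=
  {ω' | ∀ u : List ℕ, u ≠ [] → alive ω' u → pos G s ω' u ∉ gball G k}

lemma avoidSet_meas (G : SimpleGraph ℕ) (k s : ℕ) : MeasurableSet (avoidSet G k s) := by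
  have : avoidSet G k s
      = ⋂ u : List ℕ, ⋂ (_ : u ≠ []),
          ({ω : BRWOmega | alive ω u}ᶜ ∪ (fun ω => pos G s ω u) ⁻¹' (gball G k)ᶜ) := by
    ext ω
    simp only [avoidSet, Set.mem_setOf_eq, Set.mem_iInter, Set.mem_union, Set.mem_compl_iff,
      Set.mem_preimage]
    constructor
    · intro h u hu
      by_cases ha : alive ω u
      · exact Or.inr (h u hu ha)
      · exact Or.inl ha
    · intro h u hu ha
      rcases h u hu with h' | h'
      · exact absurd ha h'
      · exact h'
  rw [this]
  exact MeasurableSet.iInter fun u => MeasurableSet.iInter fun _ =>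
    ((aliveMeas u).compl).union (posMeas G s u (MeasurableSet.compl (by trivial)))

/-- **Avoidance lemma**: there is a vertex `s` at distance exactly `k` from the origin such
that with positive probability the BRW started at `s` never re-enters the ball of radius `k`. -/
lemma exists_avoid {p : PMF ℕ} {P : Measure BRWOmega}
    (hP : IsProductWith (fun _ : List ℕ => coordLaw p) P) (hp0 : p 0 = 0)
    {G : SimpleGraph ℕ} (hconn : G.Connected) (hfin : ∀ y, (G.neighborSet y).Finite)
    (htrans : ∀ x : ℕ, P {ω | VisitsInf G x ω} = 0)
    (k : ℕ) (hk : 1 ≤ k) :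
    ∃ s : ℕ, G.dist 0 s = k ∧ 0 < P (avoidSet G k s) := by
  haveI := hP.1
  have hballfin : (gball G k).Finite := gball_finite hconn hfin k
  -- visitors of the ball
  set BV : BRWOmega → Set (List ℕ) := fun ω => {v | alive ω v ∧ pos G 0 ω v ∈ gball G k}
    with hBV
  set F : Set BRWOmega := {ω | (BV ω).Finite} with hF
  have hFc : P Fᶜ = 0 := by
    have hsub : Fᶜ ⊆ ⋃ x ∈ gball G k, VinfSet G 0 x := by
      intro ω hω
      have hinf : (BV ω).Infinite := hω
      have : BV ω ⊆ ⋃ x ∈ gball G k, visitSet G 0 x ω := by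
        rintro v ⟨hv1, hv2⟩
        exact Set.mem_biUnion hv2 ⟨hv1, rfl⟩
      by_contra hc
      simp only [Set.mem_iUnion, not_exists] at hc
      have : (BV ω).Finite := by
        refine Set.Finite.subset (Set.Finite.biUnion hballfin fun x hx => ?_) this
        have := hc x hx
        exact Set.not_infinite.mp this
      exact hinf this
    refine measure_mono_null hsub ?_
    exact (measure_biUnion_null_iff hballfin.countable).mpr fun x _ =>
      vinf_zero_from_any hP hp0 hconn hfin (htrans x) 0
  -- deepest visitor decomposition
  set F' : List ℕ → ℕ → Set BRWOmega := fun w s =>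
    {ω | alive ω w ∧ pos G 0 ω w = s ∧ pos G 0 ω w ∈ gball G k ∧
      ∀ u : List ℕ, u ≠ [] → ¬(alive ω (u ++ w) ∧ pos G 0 ω (u ++ w) ∈ gball G k)} with hF'
  have hcover : F ⊆ ⋃ w : List ℕ, ⋃ s : ℕ, F' w s := by
    intro ω hω
    have hroot : ([] : List ℕ) ∈ BV ω := by
      refine ⟨trivial, ?_⟩
      show G.dist 0 (pos G 0 ω []) ≤ k
      show G.dist 0 0 ≤ k
      rw [SimpleGraph.dist_self]
      omega
    obtain ⟨w, hwmem, hwmax⟩ := Set.Finite.exists_maximalFor List.length _ hω ⟨[], hroot⟩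
    refine Set.mem_iUnion.mpr ⟨w, Set.mem_iUnion.mpr ⟨pos G 0 ω w, ?_⟩⟩
    refine ⟨hwmem.1, rfl, hwmem.2, ?_⟩
    rintro u hu ⟨ha, hb⟩
    have hmem : u ++ w ∈ BV ω := ⟨ha, hb⟩
    have hlen : w.length ≤ (u ++ w).length := by
      rw [List.length_append]; omega
    have := hwmax hmem hlen
    rw [List.length_append] at this
    have : u.length = 0 := by omega
    exact hu (List.length_eq_zero_iff.mp this)
  -- some piece has positive probability
  have hex : ∃ w s, 0 < P (F' w s) := by
    by_contra hc
    push_neg at hc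
    have hz : ∀ w s, P (F' w s) = 0 := fun w s => le_antisymm (hc w s) zero_le
    have hun : P (⋃ w : List ℕ, ⋃ s : ℕ, F' w s) = 0 := by
      refine measure_iUnion_null fun w => measure_iUnion_null fun s => hz w s
    have h1 : P Set.univ ≤ P Fᶜ + P (⋃ w : List ℕ, ⋃ s : ℕ, F' w s) := by
      refine le_trans (measure_mono ?_) (measure_union_le _ _)
      intro ω _
      by_cases hωF : ω ∈ F
      · exact Or.inr (hcover hωF)
      · exact Or.inl hωF
    rw [hFc, hun, measure_univ] at h1
    simpa using h1
  obtain ⟨w, s, hws⟩ := hex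
  -- the piece is contained in the shifted avoidance event
  have hsub2 : F' w s ⊆ shiftT w ⁻¹' avoidSet G k s := by
    rintro ω ⟨h1, h2, h3, h4⟩
    intro u hu ha
    have ha' : alive ω (u ++ w) := (alive_shiftT h1 u).mp ha
    intro hball
    refine h4 u hu ⟨ha', ?_⟩
    have hps := pos_shiftT G 0 ω w u
    rw [h2] at hps
    rwa [← hps]
  have hPA : 0 < P (avoidSet G k s) := by
    have := measure_mono (μ := P) hsub2
    rw [P_shiftT_preimage hP w (avoidSet_meas G k s)] at this
    exact lt_of_lt_of_le hws this
  -- s is in the ball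
  have hsball : s ∈ gball G k := by
    by_contra hsb
    have : F' w s = ∅ := by
      ext ω
      simp only [hF', Set.mem_setOf_eq, Set.mem_empty_iff_false, iff_false]
      rintro ⟨-, h2, h3, -⟩
      rw [h2] at h3
      exact hsb h3
    rw [this, measure_empty] at hws
    exact lt_irrefl _ hws
  -- s is at distance exactly k
  have hdist : G.dist 0 s = k := by
    by_contra hne
    have hlt : G.dist 0 s + 1 ≤ k := by
      have : G.dist 0 s ≤ k := hsball
      omega
    -- then the first child of the root of the avoiding BRW would be in the ball
    set N : Set BRWOmega := {ω | offspring ω [] = 0} ∪ {ω | (ω [0]).2 ∉ Set.Ioo (0:ℝ) 1}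
      with hNdef
    have hNnull : P N = 0 :=
      measure_union_null (P_off_zero hP hp0 []) (P_seed_out hP [0])
    have hsubN : avoidSet G k s ⊆ N := by
      intro ω hω
      by_contra hωN
      rw [hNdef] at hωN
      simp only [Set.mem_union, Set.mem_setOf_eq, not_or, not_not] at hωN
      obtain ⟨hoff, hseed⟩ := hωN
      have halive0 : alive ω [0] := by
        refine ⟨?_, trivial⟩
        have : offspring ω [] ≠ 0 := hoff
        omega
      have hpos0 : pos G s ω [0] = gstep G s ((ω [0]).2) := rfl
      have hadj : G.Adj s (pos G s ω [0]) := by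
        rw [hpos0]
        exact gstep_adj hconn (hfin s) hseed
      have hball : pos G s ω [0] ∈ gball G k := by
        show G.dist 0 (pos G s ω [0]) ≤ k
        have := adj_dist_le hconn hadj 0
        omega
      exact hω [0] (by simp) halive0 hball
    have := measure_mono_null hsubN hNnull
    rw [this] at hPA
    exact lt_irrefl _ hPA
  exact ⟨s, hdist, hPA⟩

end
end BRWauxH
section BRWauxI
open Set MeasureTheory

noncomputable section

/-- Finset of lists of length `m` with all entries `< j`. -/
def WF (j : ℕ) : ℕ → Finset (List ℕ)
  | 0 => {[]}
  | m + 1 => ((Finset.range j) ×ˢ WF j m).image (fun q => q.1 :: q.2)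

lemma mem_WF {j : ℕ} : ∀ {m : ℕ} {v : List ℕ},
    v ∈ WF j m ↔ v.length = m ∧ ∀ i ∈ v, i < j := by
  intro m
  induction m with
  | zero =>
      intro v
      constructor
      · intro hv
        rw [WF, Finset.mem_singleton] at hv
        subst hv
        exact ⟨rfl, fun i hi => absurd hi List.not_mem_nil⟩
      · rintro ⟨hlen, -⟩
        rw [WF, Finset.mem_singleton]
        exact List.length_eq_zero_iff.mp hlen
  | succ m ih =>
      intro v
      constructor
      · intro hv
        rw [WF, Finset.mem_image] at hv
        obtain ⟨⟨i, u⟩, hq, rfl⟩ := hv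
        rw [Finset.mem_product, Finset.mem_range] at hq
        obtain ⟨hlen, hu⟩ := ih.mp hq.2
        refine ⟨by simp [hlen], ?_⟩
        intro i' hi'
        rcases List.mem_cons.mp hi' with h | h
        · subst h; exact hq.1
        · exact hu i' h
      · rintro ⟨hlen, hmem⟩
        cases v with
        | nil => simp at hlen
        | cons i u =>
            rw [WF, Finset.mem_image]
            refine ⟨(i, u), ?_, rfl⟩
            rw [Finset.mem_product, Finset.mem_range]
            refine ⟨hmem i (List.mem_cons_self), ih.mpr ⟨by simpa using hlen, ?_⟩⟩
            exact fun i' hi' => hmem i' (List.mem_cons_of_mem _ hi')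

lemma alive_append_left {ω : BRWOmega} : ∀ {u w : List ℕ}, alive ω (u ++ w) → alive ω w := by
  intro u
  induction u with
  | nil => intro w h; exact h
  | cons i u ih => intro w h; exact ih h.2

lemma mem_interL {ω : BRWOmega} : ∀ {L : List (Set (List ℕ × Bool) × Set BRWOmega)},
    ω ∈ interL L ↔ ∀ q ∈ L, ω ∈ q.2 := by
  intro L
  induction L with
  | nil => simp [interL]
  | cons q l ih =>
      rw [interL, Set.mem_inter_iff, ih]
      constructor
      · rintro ⟨h1, h2⟩ q' hq'
        rcases List.mem_cons.mp hq' with h | h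
        · subst h; exact h1
        · exact h2 q' h
      · intro h
        exact ⟨h q (List.mem_cons_self), fun q' hq' => h q' (List.mem_cons_of_mem _ hq')⟩

lemma prodL_const {P : Measure BRWOmega} {c : ℝ≥0∞} :
    ∀ {L : List (Set (List ℕ × Bool) × Set BRWOmega)}, (∀ q ∈ L, P q.2 = c) →
      prodL P L = c ^ L.length := by
  intro L
  induction L with
  | nil => intro _; simp [prodL]
  | cons q l ih =>
      intro h
      rw [prodL, h q (List.mem_cons_self), ih fun q' hq' => h q' (List.mem_cons_of_mem _ hq'),
        List.length_cons, pow_succ, mul_comm]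

lemma avoidSet_meas' {b : Set (List ℕ × Bool)} (G : SimpleGraph ℕ) (k s : ℕ)
    (hT : ∀ u : List ℕ, (u, true) ∈ b) (hF : ∀ u : List ℕ, u ≠ [] → (u, false) ∈ b) :
    MeasurableSet[mOf b] (avoidSet G k s) := by
  have : avoidSet G k s
      = ⋂ u : List ℕ, ⋂ (_ : u ≠ []),
          ({ω : BRWOmega | alive ω u}ᶜ ∪ (fun ω => pos G s ω u) ⁻¹' (gball G k)ᶜ) := by
    ext ω
    simp only [avoidSet, Set.mem_setOf_eq, Set.mem_iInter, Set.mem_union, Set.mem_compl_iff,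
      Set.mem_preimage]
    constructor
    · intro h u hu
      by_cases ha : alive ω u
      · exact Or.inr (h u hu ha)
      · exact Or.inl ha
    · intro h u hu ha
      rcases h u hu with h' | h'
      · exact absurd ha h'
      · exact h'
  rw [this]
  refine MeasurableSet.iInter fun u => MeasurableSet.iInter fun hu => ?_
  refine MeasurableSet.union ?_ ?_
  · exact (measSet_alive u fun i u' _ => hT u').compl
  · exact measurable_pos G s u (fun u' _ hne => hF u' hne)
      (MeasurableSet.compl (by trivial))

end
end BRWauxI
section BRWauxJ
open Set MeasureTheory

noncomputable section

/-- Splitting off the root seed from the avoidance event. -/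
lemma P_Ahat_split {p : PMF ℕ} {P : Measure BRWOmega}
    (hP : IsProductWith (fun _ : List ℕ => coordLaw p) P)
    (G : SimpleGraph ℕ) (k s : ℕ) {I' : Set ℝ} (hI'meas : MeasurableSet I') :
    P ({ω' : BRWOmega | (ω' []).2 ∈ I'} ∩ avoidSet G k s)
      = unif01 I' * P (avoidSet G k s) := by
  haveI := hP.1
  set b₀' : Set (List ℕ × Bool) := {(([] : List ℕ), false)} with hb₀'
  set b₁ : Set (List ℕ × Bool) := {q | q.1 ≠ [] ∨ q.2 = true} with hb₁
  set C' : Set BRWOmega := cylSet {([] : List ℕ)} (fun _ => Set.univ) (fun _ => I') with hC'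
  have hC'mem : C' ∈ cylIn b₀' := by
    refine ⟨{[]}, fun _ => Set.univ, fun _ => I', fun _ => .univ, fun _ => hI'meas, ?_, rfl⟩
    intro v hv
    rw [Finset.mem_singleton] at hv
    subst hv
    exact ⟨Or.inr rfl, Or.inl rfl⟩
  have hVmeas : MeasurableSet[mOf b₁] (avoidSet G k s) :=
    avoidSet_meas' G k s (fun u => Or.inr rfl) (fun u hu => Or.inl hu)
  have hdisj' : Disjoint b₀' b₁ := by
    rw [Set.disjoint_left]
    rintro q hq hq'
    rw [hb₀', Set.mem_singleton_iff] at hq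
    subst hq
    rcases hq' with h | h
    · exact h rfl
    · simp at h
  have h1 := ind_blocks hP [(b₁, avoidSet G k s)]
    (List.pairwise_singleton _ _)
    (by
      intro q hq
      rw [List.mem_singleton] at hq
      subst hq
      exact hVmeas)
    b₀'
    (by
      intro q hq
      rw [List.mem_singleton] at hq
      subst hq
      exact hdisj')
    C' hC'mem
  simp only [interL, prodL, Set.inter_univ, mul_one] at h1
  have hset : {ω' : BRWOmega | (ω' []).2 ∈ I'} ∩ avoidSet G k s = C' ∩ avoidSet G k s := by
    congr 1
    ext ω
    simp [cylSet, hC']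
  have hPC' : P C' = unif01 I' := by
    rw [hC', P_cylSet hP _ (fun _ => .univ) (fun _ => hI'meas), Finset.prod_singleton,
      measure_univ, one_mul]
  rw [hset, h1, hPC']

end
end BRWauxJ

/-- For the trace of a transient branching random walk on a (connected)
graph `G` of bounded degree: for every `k ≥ 1`, with positive probability the trace
contains a line segment of length `k`, i.e. a path `x₀, …, x_k` whose interior vertices
have degree `2` in the trace. -/
theorem trace_contains_line_segment_pos_prob
    (G : SimpleGraph ℕ) (hconn : G.Connected) (hbd : GoodGraph G)
    (p : PMF ℕ) (hp0 : p 0 = 0) (hp1 : p 1 < 1)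
    (P : Measure BRWOmega)
    (hP : IsProductWith (fun _ : List ℕ => coordLaw p) P)
    (htrans : ∀ x : ℕ, P {ω | VisitsInf G x ω} = 0)
    (k : ℕ) (hk : 1 ≤ k) :
    0 < P {ω | ∃ x : ℕ → ℕ,
      (∀ i < k, (traceGraph G 0 ω).Adj (x i) (x (i + 1))) ∧
      (∀ i ≤ k, ∀ j ≤ k, i ≠ j → x i ≠ x j) ∧
      ∀ i, 1 ≤ i → i + 1 ≤ k → gdeg (traceGraph G 0 ω) (x i) = 2} := by
  classical
  haveI := hP.1
  have hfin : ∀ y, (G.neighborSet y).Finite := hbd.2.1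
  obtain ⟨j, hj0, hpj⟩ := exists_pmf_pos p hp0
  obtain ⟨s, hsd, hα⟩ := exists_avoid hP hp0 hconn hfin htrans k hk
  obtain ⟨g, hg0, hgk, hgadj, hgdist⟩ := exists_geodesic hconn k s hsd
  -- forcing intervals along the geodesic
  have hIex : ∀ m : ℕ, ∃ I : Set ℝ, I ⊆ Set.Ioo (0:ℝ) 1 ∧ MeasurableSet I ∧ 0 < unif01 I ∧
      (m < k → ∀ r ∈ I, gstep G (g m) r = g (m + 1)) := by
    intro m
    by_cases hm : m < k
    · obtain ⟨I, h1, h2, h3, h4⟩ := exists_force_interval hconn (hfin (g m)) (hgadj m hm)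
      exact ⟨I, h1, h2, h3, fun _ => h4⟩
    · refine ⟨Set.Ioo 0 1, subset_rfl, measurableSet_Ioo, ?_, fun h => absurd h hm⟩
      rw [unif01, Measure.restrict_apply measurableSet_Ioo, Set.inter_self, Real.volume_Ioo]
      norm_num
  choose I hIsub hImeas hIpos hIforce using hIex
  -- the forced cylinder
  set Wlt : Finset (List ℕ) := (Finset.range k).biUnion (WF j) with hWlt
  have mem_Wlt : ∀ {v : List ℕ}, v ∈ Wlt ↔ (v.length < k ∧ ∀ i ∈ v, i < j) := by
    intro v
    rw [hWlt, Finset.mem_biUnion]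
    constructor
    · rintro ⟨m, hm, hv⟩
      obtain ⟨h1, h2⟩ := mem_WF.mp hv
      exact ⟨h1 ▸ Finset.mem_range.mp hm, h2⟩
    · rintro ⟨h1, h2⟩
      exact ⟨v.length, Finset.mem_range.mpr h1, mem_WF.mpr ⟨rfl, h2⟩⟩
  set B : List ℕ → Set ℝ := fun v => if v = [] then Set.univ else I (v.length - 1) with hB
  have hBmeas : ∀ v, MeasurableSet (B v) := fun v => by
    rw [hB]; dsimp only; split_ifs; exacts [.univ, hImeas _]
  set C : Set BRWOmega := cylSet Wlt (fun _ => ({j} : Set ℕ)) B with hC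
  set b₀ : Set (List ℕ × Bool) :=
    {q | (q.2 = true ∧ q.1 ∈ Wlt) ∨ (q.2 = false ∧ q.1 ∈ Wlt ∧ q.1 ≠ [])} with hb₀
  have hCmem : C ∈ cylIn b₀ := by
    refine ⟨Wlt, fun _ => ({j} : Set ℕ), B, fun _ => measurableSet_singleton j, hBmeas, ?_, rfl⟩
    intro v hv
    constructor
    · exact Or.inl (Or.inl ⟨rfl, hv⟩)
    · by_cases hne : v = []
      · refine Or.inr ?_
        rw [hB]; simp [hne]
      · exact Or.inl (Or.inr ⟨rfl, hv, hne⟩)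
  -- the block events
  set Ahat : Set BRWOmega := {ω' | (ω' []).2 ∈ I (k - 1)} ∩ avoidSet G k s with hAhat
  have hAhatMeas : MeasurableSet Ahat :=
    (((measurable_pi_apply ([] : List ℕ)).snd) (hImeas (k - 1))).inter (avoidSet_meas G k s)
  set L : List (Set (List ℕ × Bool) × Set BRWOmega) :=
    (WF j k).toList.map (fun w => (blockOf w, shiftT w ⁻¹' Ahat)) with hL
  have hWklen : ∀ w ∈ WF j k, w.length = k := fun w hw => (mem_WF.mp hw).1
  have hLpw : L.Pairwise (fun q q' => Disjoint q.1 q'.1) := by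
    rw [hL, List.pairwise_map]
    have hnd : (WF j k).toList.Pairwise (· ≠ ·) := (WF j k).nodup_toList
    refine List.Pairwise.imp_of_mem ?_ hnd
    intro a b ha hb hne
    rw [Set.disjoint_left]
    rintro ⟨v, c⟩ ⟨u, hu⟩ ⟨u', hu'⟩
    simp only at hu hu'
    rw [hu] at hu'
    have hlen : a.length = b.length := by
      rw [hWklen a (Finset.mem_toList.mp ha), hWklen b (Finset.mem_toList.mp hb)]
    exact hne (List.append_inj' hu' hlen).2
  have hLmeas : ∀ q ∈ L, MeasurableSet[mOf q.1] q.2 := by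
    intro q hq
    rw [hL, List.mem_map] at hq
    obtain ⟨w, hw, rfl⟩ := hq
    exact measSet_shiftT_preimage w hAhatMeas
  have hLdisj : ∀ q ∈ L, Disjoint b₀ q.1 := by
    intro q hq
    rw [hL, List.mem_map] at hq
    obtain ⟨w, hw, rfl⟩ := hq
    rw [Set.disjoint_left]
    rintro ⟨v, c⟩ hv ⟨u, hu⟩
    simp only at hu
    have hlt : v.length < k := by
      rcases hv with ⟨-, hmem⟩ | ⟨-, hmem, -⟩ <;> exact (mem_Wlt.mp hmem).1
    rw [hu, List.length_append, hWklen w (Finset.mem_toList.mp hw)] at hlt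
    omega
  have hind := ind_blocks hP L hLpw hLmeas b₀ hLdisj C hCmem
  -- block probabilities
  have hblockP : ∀ q ∈ L, P q.2 = unif01 (I (k - 1)) * P (avoidSet G k s) := by
    intro q hq
    rw [hL, List.mem_map] at hq
    obtain ⟨w, hw, rfl⟩ := hq
    show P (shiftT w ⁻¹' Ahat) = _
    rw [P_shiftT_preimage hP w hAhatMeas, hAhat]
    exact P_Ahat_split hP G k s (hImeas (k - 1))
  have hprod : prodL P L = (unif01 (I (k - 1)) * P (avoidSet G k s)) ^ L.length :=
    prodL_const hblockP
  -- positivity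
  have hPC : P C ≠ 0 := by
    rw [hC, P_cylSet hP _ (fun _ => measurableSet_singleton j) hBmeas]
    refine (CanonicallyOrderedAdd.prod_pos.mpr fun v hv => ?_).ne'
    refine ENNReal.mul_pos ?_ ?_
    · rw [PMF.toMeasure_apply_singleton _ _ (measurableSet_singleton j)]
      exact fun h => hpj (by simpa using h)
    · rw [hB]; dsimp only
      split_ifs
      · rw [measure_univ]; exact one_ne_zero
      · exact (hIpos _).ne'
  have hPE : 0 < P (C ∩ interL L) := by
    rw [hind, hprod]
    refine ENNReal.mul_pos hPC ?_
    refine (pow_ne_zero _ ?_)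
    exact (ENNReal.mul_pos (hIpos (k-1)).ne' hα.ne').ne'
  refine lt_of_lt_of_le hPE (measure_mono ?_)
  -- THE INCLUSION
  rintro ω ⟨hωC, hωL⟩
  have hblocks : ∀ w ∈ WF j k, shiftT w ω ∈ Ahat := by
    intro w hw
    exact mem_interL.mp hωL (blockOf w, shiftT w ⁻¹' Ahat)
      (List.mem_map.mpr ⟨w, Finset.mem_toList.mpr hw, rfl⟩)
  have hoff : ∀ v ∈ Wlt, offspring ω v = j := by
    intro v hv
    have := (hωC v hv).1
    simpa [offspring] using this
  have hseedC : ∀ v ∈ Wlt, v ≠ [] → (ω v).2 ∈ I (v.length - 1) := by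
    intro v hv hne
    have := (hωC v hv).2
    rw [hB] at this
    simpa [hne] using this
  -- entries of alive particles of generation ≤ k are < j
  have ent_lt : ∀ v : List ℕ, alive ω v → v.length ≤ k → ∀ i ∈ v, i < j := by
    intro v
    induction v with
    | nil => intro _ _ i hi; exact absurd hi List.not_mem_nil
    | cons i v ih =>
        intro ha hlen i' hi'
        rw [List.length_cons] at hlen
        have hv : ∀ i'' ∈ v, i'' < j := ih ha.2 (by omega)
        have hvW : v ∈ Wlt := mem_Wlt.mpr ⟨by omega, hv⟩
        rcases List.mem_cons.mp hi' with h | h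
        · subst h
          have := ha.1
          rw [hoff v hvW] at this
          exact this
        · exact hv i' h
  have aliveOf : ∀ v : List ℕ, (∀ i ∈ v, i < j) → v.length ≤ k → alive ω v := by
    intro v
    induction v with
    | nil => intro _ _; trivial
    | cons i v ih =>
        intro hmem hlen
        rw [List.length_cons] at hlen
        have hv : ∀ i'' ∈ v, i'' < j := fun i'' h => hmem i'' (List.mem_cons_of_mem _ h)
        have hvW : v ∈ Wlt := mem_Wlt.mpr ⟨by omega, hv⟩
        refine ⟨?_, ih hv (by omega)⟩
        rw [hoff v hvW]
        exact hmem i (List.mem_cons_self)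
  -- positions of generation ≤ k alive particles follow the geodesic
  have posW : ∀ v : List ℕ, (∀ i ∈ v, i < j) → v.length ≤ k → pos G 0 ω v = g v.length := by
    intro v
    induction v with
    | nil => intro _ _; exact hg0.symm
    | cons i v ih =>
        intro hmem hlen
        rw [List.length_cons] at hlen
        have hv : ∀ i'' ∈ v, i'' < j := fun i'' h => hmem i'' (List.mem_cons_of_mem _ h)
        have hstep : pos G 0 ω (i :: v) = gstep G (pos G 0 ω v) ((ω (i :: v)).2) := rfl
        have hseed : (ω (i :: v)).2 ∈ I v.length := by
          by_cases hcase : v.length + 1 < k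
          · have hivW : (i :: v) ∈ Wlt := mem_Wlt.mpr ⟨by rw [List.length_cons]; omega, hmem⟩
            have := hseedC _ hivW (List.cons_ne_nil i v)
            rw [List.length_cons] at this
            simpa using this
          · have hkeq : v.length + 1 = k := by omega
            have hivW : (i :: v) ∈ WF j k := mem_WF.mpr ⟨by rw [List.length_cons]; omega, hmem⟩
            have hblk : (ω (i :: v)).2 ∈ I (k - 1) := (hblocks _ hivW).1
            have hke : k - 1 = v.length := by omega
            rwa [hke] at hblk
        rw [List.length_cons, hstep, ih hv (by omega)]
        exact hIforce v.length (by omega) _ hseed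
  -- deep particles are outside the ball
  have posOut : ∀ v : List ℕ, alive ω v → k < v.length → pos G 0 ω v ∉ gball G k := by
    intro v ha hlen
    set u := v.take (v.length - k) with hu
    set w := v.drop (v.length - k) with hw
    have hv : u ++ w = v := List.take_append_drop _ v
    have hwlen : w.length = k := by rw [hw, List.length_drop]; omega
    have hune : u ≠ [] := by
      intro h
      have h2 := congrArg List.length hv
      rw [h, List.nil_append] at h2
      omega
    have hav : alive ω (u ++ w) := by rw [hv]; exact ha
    have haw : alive ω w := alive_append_left hav
    have hwW : w ∈ WF j k := mem_WF.mpr ⟨hwlen, ent_lt w haw (le_of_eq hwlen)⟩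
    have hposw : pos G 0 ω w = s := by
      rw [posW w (ent_lt w haw (le_of_eq hwlen)) (le_of_eq hwlen), hwlen, hgk]
    have havoid := (hblocks w hwW).2
    have h1 := havoid u hune ((alive_shiftT haw u).mpr hav)
    have hps := pos_shiftT G 0 ω w u
    rw [hposw] at hps
    rw [hps, hv] at h1
    exact h1
  -- injectivity of the geodesic
  have ginj : ∀ a ≤ k, ∀ b ≤ k, g a = g b → a = b := by
    intro a ha b hb h
    have h1 := hgdist a ha
    have h2 := hgdist b hb
    rw [h] at h1
    omega
  have hgball : ∀ m ≤ k, g m ∈ gball G k := by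
    intro m hm
    show G.dist 0 (g m) ≤ k
    rw [hgdist m hm]
    exact hm
  -- trace adjacency along the geodesic
  have hsp_ent : ∀ m : ℕ, ∀ i ∈ sp m, i < j := by
    intro m i hi
    rw [List.eq_of_mem_replicate hi]
    omega
  have htradj : ∀ m, m < k → (traceGraph G 0 ω).Adj (g m) (g (m + 1)) := by
    intro m hm
    refine ⟨?_, 0, sp m, ?_, Or.inl ⟨?_, ?_⟩⟩
    · intro h
      have := ginj m (by omega) (m + 1) (by omega) h
      omega
    · show alive ω (sp (m + 1))
      exact aliveOf (sp (m + 1)) (hsp_ent (m + 1)) (by rw [sp_length]; omega)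
    · rw [posW (sp m) (hsp_ent m) (by rw [sp_length]; omega), sp_length]
    · show pos G 0 ω (sp (m + 1)) = g (m + 1)
      rw [posW (sp (m + 1)) (hsp_ent (m + 1)) (by rw [sp_length]; omega), sp_length]
  -- assemble the witness
  refine ⟨g, fun m hm => htradj m hm, ?_, ?_⟩
  · intro a ha b hb hne h
    exact hne (ginj a ha b hb h)
  · intro m hm1 hm2
    have hset : (traceGraph G 0 ω).neighborSet (g m) = {g (m - 1), g (m + 1)} := by
      ext y
      simp only [SimpleGraph.mem_neighborSet, Set.mem_insert_iff, Set.mem_singleton_iff]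
      constructor
      · rintro ⟨hne, i, v, halive, hcase⟩
        have hav : alive ω v := halive.2
        rcases Nat.lt_or_ge v.length k with hvk | hvk
        · -- lockstep edges
          have hent : ∀ i' ∈ v, i' < j := ent_lt v hav (by omega)
          have hent' : ∀ i' ∈ (i :: v), i' < j := ent_lt (i :: v) halive
            (by rw [List.length_cons]; omega)
          have hpv : pos G 0 ω v = g v.length := posW v hent (by omega)
          have hpiv : pos G 0 ω (i :: v) = g (v.length + 1) := by
            have := posW (i :: v) hent' (by rw [List.length_cons]; omega)
            rwa [List.length_cons] at this
          rcases hcase with ⟨h1, h2⟩ | ⟨h1, h2⟩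
          · have hveq : v.length = m := by
              refine ginj v.length (by omega) m (by omega) ?_
              rw [← hpv, h1]
            right
            rw [← h2, hpiv, hveq]
          · have hveq : v.length + 1 = m := by
              refine ginj (v.length + 1) (by omega) m (by omega) ?_
              rw [← hpiv, h2]
            left
            rw [← h1, hpv]
            congr 1
            omega
        · exfalso
          rcases eq_or_lt_of_le hvk with heq | hlt
          · -- v at generation k, child outside the ball
            have hpv : pos G 0 ω v = g k := by
              rw [posW v (ent_lt v hav (by omega)) (by omega), ← heq]
            have hout : pos G 0 ω (i :: v) ∉ gball G k :=
              posOut (i :: v) halive (by rw [List.length_cons]; omega)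
            rcases hcase with ⟨h1, h2⟩ | ⟨h1, h2⟩
            · have : k = m := by
                refine ginj k (le_refl k) m (by omega) ?_
                rw [← hpv, h1]
              omega
            · rw [h2] at hout
              exact hout (hgball m (by omega))
          · -- both endpoints outside the ball
            have hout1 : pos G 0 ω v ∉ gball G k := posOut v hav (by omega)
            have hout2 : pos G 0 ω (i :: v) ∉ gball G k :=
              posOut (i :: v) halive (by rw [List.length_cons]; omega)
            rcases hcase with ⟨h1, h2⟩ | ⟨h1, h2⟩
            · rw [h1] at hout1
              exact hout1 (hgball m (by omega))
            · rw [h2] at hout2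
              exact hout2 (hgball m (by omega))
      · intro h
        rcases h with rfl | rfl
        · have h := htradj (m - 1) (by omega)
          rw [Nat.sub_add_cancel hm1] at h
          exact h.symm
        · exact htradj m (by omega)
    rw [gdeg, hset]
    refine Set.ncard_pair ?_
    intro h
    have := ginj (m - 1) (by omega) (m + 1) (by omega) h
    omega
end

section
/- Let G be a locally finite graph with finitely many ends ω_1, …, ω_k, all of which are thin. Then there exists a descending sequence of cuts (C_n) with ∩_n C_n = ∅ separating any fixed root from infinity, such that |∂C_n| ≤ Σ_{i=1}^k t(ω_i) for all n; in particular the root is separated from infinity by vertex sets of uniformly bounded size at arbitrarily large distance. -/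
/-- `r` is a ray in `H`: an infinite self-avoiding path. -/
structure IsRay (H : SimpleGraph ℕ) (r : ℕ → ℕ) : Prop where
  adj : ∀ n, H.Adj (r n) (r (n + 1))
  inj : Function.Injective r

/-- Two rays cannot be separated by any finite set of vertices
(they belong to the same end). -/
def RayConn (H : SimpleGraph ℕ) (r s : ℕ → ℕ) : Prop :=
  ∀ F : Set ℕ, F.Finite → ∃ m n, ∃ W : H.Walk (r m) (s n), ∀ z ∈ W.support, z ∉ F

/-- Interior vertex boundary of a vertex set. -/
def vBoundary (H : SimpleGraph ℕ) (C : Set ℕ) : Set ℕ :=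
  {x | x ∈ C ∧ ∃ y, y ∉ C ∧ H.Adj x y}

/-- A cut: a vertex set with finite boundary. -/
def IsCut (H : SimpleGraph ℕ) (C : Set ℕ) : Prop := (vBoundary H C).Finite

/-- A ray lies in `C`: all but finitely many of its vertices are in `C`. -/
def RayLiesIn (r : ℕ → ℕ) (C : Set ℕ) : Prop := {n | r n ∉ C}.Finite

/-- The end of the ray `r` lies in `C`: every ray equivalent to `r` lies in `C`. -/
def EndLiesIn (H : SimpleGraph ℕ) (r : ℕ → ℕ) (C : Set ℕ) : Prop :=
  ∀ s, IsRay H s → RayConn H r s → RayLiesIn s C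

/-- Thickness of the end of the ray `r`: the smallest `t ∈ ℕ∞` admitting a descending
sequence of cuts containing the end, with boundaries of size `≤ t` and empty
intersection. -/
noncomputable def endThickness (H : SimpleGraph ℕ) (r : ℕ → ℕ) : ℕ∞ :=
  sInf {t : ℕ∞ | ∃ C : ℕ → Set ℕ, (∀ n, C (n + 1) ⊆ C n) ∧ (∀ n, IsCut H (C n)) ∧
    (∀ n, EndLiesIn H r (C n)) ∧ (∀ n, ((vBoundary H (C n)).encard : ℕ∞) ≤ t) ∧
    (⋂ n, C n) = ∅}


/-- In `ℕ∞`, the infimum of a set is attained whenever it is `< ⊤`. -/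
lemma enat_sInf_mem {S : Set ℕ∞} (h : sInf S < ⊤) : sInf S ∈ S := by
  have hne : S.Nonempty := by
    by_contra hS
    rw [Set.not_nonempty_iff_eq_empty] at hS
    simp [hS] at h
  obtain ⟨m, hm, hmin⟩ := (wellFounded_lt (α := ℕ∞)).has_min S hne
  have : sInf S = m := le_antisymm (sInf_le hm) (le_sInf fun b hb => not_lt.1 (hmin b hb))
  rw [this]; exact hm

lemma encard_iUnion_fin_le : ∀ (k : ℕ) (S : Fin k → Set ℕ),
    (⋃ i, S i).encard ≤ ∑ i, (S i).encard := by
  intro k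
  induction k with
  | zero => intro S; simp
  | succ k ih =>
    intro S
    have hu : (⋃ i, S i) = S 0 ∪ ⋃ i : Fin k, S i.succ := by
      ext x
      simp only [Set.mem_iUnion, Set.mem_union]
      constructor
      · rintro ⟨i, hi⟩
        rcases Fin.eq_zero_or_eq_succ i with h0 | ⟨j, rfl⟩
        · left; rwa [h0] at hi
        · right; exact ⟨j, hi⟩
      · rintro (h | ⟨j, hj⟩)
        · exact ⟨0, h⟩
        · exact ⟨j.succ, hj⟩
    rw [hu, Fin.sum_univ_succ]
    exact le_trans (Set.encard_union_le _ _) (add_le_add le_rfl (ih _))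

lemma vBoundary_iUnion_subset (H : SimpleGraph ℕ) {k : ℕ} (S : Fin k → Set ℕ) :
    vBoundary H (⋃ i, S i) ⊆ ⋃ i, vBoundary H (S i) := by
  rintro x ⟨hx, y, hy, hxy⟩
  obtain ⟨i, hi⟩ := Set.mem_iUnion.1 hx
  exact Set.mem_iUnion.2 ⟨i, hi, y, fun hc => hy (Set.mem_iUnion.2 ⟨i, hc⟩), hxy⟩

/-- Combinatorial balls, defined recursively. -/
def gBall (H : SimpleGraph ℕ) (o : ℕ) : ℕ → Set ℕ
  | 0 => {o}
  | n + 1 => gBall H o n ∪ ⋃ y ∈ gBall H o n, H.neighborSet y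

lemma gBall_finite (H : SimpleGraph ℕ) (hlf : ∀ x, (H.neighborSet x).Finite) (o : ℕ) :
    ∀ n, (gBall H o n).Finite := by
  intro n
  induction n with
  | zero => simp [gBall]
  | succ n ih => exact ih.union (ih.biUnion fun y _ => hlf y)

lemma gBall_mono (H : SimpleGraph ℕ) (o : ℕ) : Monotone (gBall H o) := by
  apply monotone_nat_of_le_succ
  intro n
  exact Set.subset_union_left

lemma mem_gBall_of_walk (H : SimpleGraph ℕ) (o : ℕ) :
    ∀ {x : ℕ} (w : H.Walk x o), x ∈ gBall H o w.length := by
  intro x w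
  induction w with
  | nil => simp [gBall]
  | @cons x y _ h p ih =>
    simp only [SimpleGraph.Walk.length_cons]
    right
    exact Set.mem_biUnion ih h.symm

lemma ball_finite (H : SimpleGraph ℕ) (hconn : H.Connected)
    (hlf : ∀ x, (H.neighborSet x).Finite) (o n : ℕ) :
    {x | H.dist o x < n}.Finite := by
  apply (gBall_finite H hlf o n).subset
  intro x hx
  obtain ⟨w, hw⟩ := hconn.exists_walk_length_eq_dist x o
  have : x ∈ gBall H o w.length := mem_gBall_of_walk H o w
  have hle : w.length ≤ n := by
    rw [hw, SimpleGraph.dist_comm]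
    exact le_of_lt hx
  exact gBall_mono H o hle this

/-- Let `H` be a locally finite (connected) graph whose ends are exactly
the (pairwise inequivalent) ends of the rays `R 0, …, R (k-1)`, all thin. Then there is a
descending sequence of cuts `(C n)` with empty intersection, boundaries of size at most
`∑ᵢ t(ωᵢ)`, separating any fixed root `o` from infinity; in particular the root is
separated from infinity by finite vertex sets of uniformly bounded size at arbitrarily
large distance. -/
theorem finitely_many_thin_ends_bounded_cuts
    (H : SimpleGraph ℕ) (hconn : H.Connected) (hlf : ∀ x, (H.neighborSet x).Finite)
    (o : ℕ) (k : ℕ) (R : Fin k → ℕ → ℕ)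
    (hray : ∀ i, IsRay H (R i))
    (hdistinct : Pairwise fun i j => ¬ RayConn H (R i) (R j))
    (hall : ∀ s : ℕ → ℕ, IsRay H s → ∃ i, RayConn H (R i) s)
    (hthin : ∀ i, endThickness H (R i) < ⊤) :
    (∃ C : ℕ → Set ℕ, (∀ n, C (n + 1) ⊆ C n) ∧ (∀ n, IsCut H (C n)) ∧
      (⋂ n, C n) = ∅ ∧
      (∀ n, ((vBoundary H (C n)).encard : ℕ∞) ≤ ∑ i, endThickness H (R i)) ∧
      ∀ n, ∀ s : ℕ → ℕ, IsRay H s → s 0 = o → ∃ m, s m ∈ vBoundary H (C n)) ∧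
    ∀ n : ℕ, ∃ F : Set ℕ, F.Finite ∧ (F.encard : ℕ∞) ≤ ∑ i, endThickness H (R i) ∧
      (∀ x ∈ F, n ≤ H.dist o x) ∧
      ∀ s : ℕ → ℕ, IsRay H s → s 0 = o → ∃ m, s m ∈ F := by
  classical
  -- choose the witness sequences of cuts for each end
  have hwit : ∀ i : Fin k, ∃ D : ℕ → Set ℕ, (∀ n, D (n + 1) ⊆ D n) ∧ (∀ n, IsCut H (D n)) ∧
      (∀ n, EndLiesIn H (R i) (D n)) ∧
      (∀ n, ((vBoundary H (D n)).encard : ℕ∞) ≤ endThickness H (R i)) ∧ (⋂ n, D n) = ∅ := by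
    intro i
    have hm := enat_sInf_mem (hthin i)
    exact hm
  choose D hDdesc hDcut hDend hDbd hDint using hwit
  have hanti : ∀ i, Antitone (D i) := fun i => antitone_nat_of_succ_le (hDdesc i)
  set Cfull : ℕ → Set ℕ := fun m => ⋃ i, D i m with hCfull
  have hCanti : Antitone Cfull := by
    intro a b hab x hx
    obtain ⟨i, hi⟩ := Set.mem_iUnion.1 hx
    exact Set.mem_iUnion.2 ⟨i, hanti i hab hi⟩
  have hout : ∀ x : ℕ, ∃ N, ∀ m, N ≤ m → x ∉ Cfull m := by
    intro x
    have h1 : ∀ i : Fin k, ∃ n, x ∉ D i n := by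
      intro i
      by_contra hc
      push_neg at hc
      have : x ∈ ⋂ n, D i n := Set.mem_iInter.2 hc
      rw [hDint i] at this
      exact this
    choose g hg using h1
    refine ⟨Finset.univ.sup g, fun m hm hx => ?_⟩
    obtain ⟨i, hi⟩ := Set.mem_iUnion.1 hx
    exact hg i (hanti i (le_trans (Finset.le_sup (Finset.mem_univ i)) hm) hi)
  obtain ⟨n0, hn0⟩ := hout o
  set C : ℕ → Set ℕ := fun n => Cfull (n0 + n) with hC
  have hsub : ∀ n, vBoundary H (C n) ⊆ ⋃ i, vBoundary H (D i (n0 + n)) := fun n =>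
    vBoundary_iUnion_subset H _
  have hcut : ∀ n, IsCut H (C n) := fun n =>
    ((Set.finite_iUnion fun i => hDcut i (n0 + n)).subset (hsub n))
  have hbd : ∀ n, ((vBoundary H (C n)).encard : ℕ∞) ≤ ∑ i, endThickness H (R i) := by
    intro n
    calc (vBoundary H (C n)).encard ≤ (⋃ i, vBoundary H (D i (n0 + n))).encard :=
          Set.encard_mono (hsub n)
      _ ≤ ∑ i, (vBoundary H (D i (n0 + n))).encard := encard_iUnion_fin_le _ _
      _ ≤ ∑ i, endThickness H (R i) := Finset.sum_le_sum fun i _ => hDbd i (n0 + n)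
  have hoC : ∀ n, o ∉ C n := fun n => hn0 (n0 + n) (Nat.le_add_right _ _)
  have hsep : ∀ n, ∀ s : ℕ → ℕ, IsRay H s → s 0 = o → ∃ m, s m ∈ vBoundary H (C n) := by
    intro n s hs hs0
    obtain ⟨i, hi⟩ := hall s hs
    have hlies : RayLiesIn s (D i (n0 + n)) := hDend i (n0 + n) s hs hi
    have hne : {m | s m ∈ C n}.Nonempty := by
      have hinf : {m | s m ∉ D i (n0 + n)}ᶜ.Infinite := hlies.infinite_compl
      obtain ⟨m, hm⟩ := hinf.nonempty
      simp only [Set.mem_compl_iff, Set.mem_setOf_eq, not_not] at hm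
      exact ⟨m, Set.mem_iUnion.2 ⟨i, hm⟩⟩
    set m := sInf {m | s m ∈ C n} with hmdef
    have hmem : s m ∈ C n := Nat.sInf_mem hne
    have hm0 : m ≠ 0 := by
      intro h
      rw [h, hs0] at hmem
      exact hoC n hmem
    have hprev' : m - 1 ∉ {m | s m ∈ C n} := Nat.notMem_of_lt_sInf (by omega)
    have hprev : s (m - 1) ∉ C n := hprev'
    refine ⟨m, hmem, s (m - 1), hprev, ?_⟩
    have := hs.adj (m - 1)
    have hmm : m - 1 + 1 = m := by omega
    rw [hmm] at this
    exact this.symm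
  refine ⟨⟨C, fun n => hCanti (by omega), hcut, ?_, hbd, hsep⟩, ?_⟩
  · ext x
    simp only [Set.mem_iInter, Set.mem_empty_iff_false, iff_false, not_forall]
    obtain ⟨N, hN⟩ := hout x
    exact ⟨N, hN (n0 + N) (Nat.le_add_left _ _)⟩
  · intro n
    have hball : {x | H.dist o x < n}.Finite := ball_finite H hconn hlf o n
    choose f hf using hout
    set M := hball.toFinset.sup f with hM
    refine ⟨vBoundary H (C M), hcut M, hbd M, ?_, fun s hs hs0 => hsep M s hs hs0⟩
    intro x hx
    by_contra hcon
    push_neg at hcon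
    have hxb : x ∈ hball.toFinset := by
      rw [Set.Finite.mem_toFinset]
      exact hcon
    have hfx : f x ≤ n0 + M := le_trans (Finset.le_sup hxb) (Nat.le_add_left _ _)
    exact hf x (n0 + M) hfx hx.1
end
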